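/- arXiv:1412.4572 — 3 statements merged into one kernel-verified Lean document; each statement's English description precedes it below -/
import Mathlib

section
/- Let G and H be finitely presented groups with fixed finite symmetric generating sets S and T, let n ∈ ℕ, and let 𝒜 = B_H(n,1_H)^S × B_G(n²+n,1_G)^{B_H(n,1_H)}. Then the set {(df, ℓ_{Ff}) : (f,F) ∈ QIP_n(G,H)} ⊆ 𝒜^G is a subshift of finite type. -/
/-- The Cayley graph of a group with respect to a (symmetric) set `S`:
`g` and `g'` are adjacent when they differ by right multiplication by an element of `S`. -/
def cayley {G : Type*} [Group G] (S : Set G) : SimpleGraph G :=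
  SimpleGraph.fromRel (fun g g' => g⁻¹ * g' ∈ S)

/-- The closed ball of radius `n` about `g` in the word metric induced by `S`. -/
def ball {G : Type*} [Group G] (S : Set G) (n : ℕ) (g : G) : Set G :=
  {x : G | (cayley S).dist g x ≤ n}

/-- `f : G → H` is `n`-Lipschitz for the word metrics associated to `S` and `T`. -/
def IsLip {G H : Type*} [Group G] [Group H] (S : Set G) (T : Set H)
    (n : ℕ) (f : G → H) : Prop :=
  ∀ x y : G, (cayley T).dist (f x) (f y) ≤ n * (cayley S).dist x y

/-- The product in `G` of (the letters of) a word over `S`. -/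
def wordProd {G : Type*} [Group G] (S : Finset G) (w : List ↥S) : G :=
  (w.map (fun s => (s : G))).prod

/-- The integral `∫_{g·w} σ` of a configuration `σ : G → (S → H)` along the word `w` based at
`g` : the telescoping product `σ(g)(s₀)·σ(gs₀)(s₁)⋯σ(gs₀⋯s_{k-1})(s_k)`. -/
def sint {G H : Type*} [Group G] [Group H] {S : Finset G}
    (σ : G → ↥S → H) : G → List ↥S → H
  | _, [] => 1
  | g, s :: w => σ g s * sint σ (g * (s : G)) w

/-- An `n`-QI pair: `f` and `F` are `n`-Lipschitz and mutual `n`-quasi-inverses. -/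
def IsQIPair {G H : Type*} [Group G] [Group H] (S : Set G) (T : Set H)
    (n : ℕ) (f : G → H) (F : H → G) : Prop :=
  IsLip S T n f ∧ IsLip T S n F ∧
    (∀ g : G, (cayley S).dist (F (f g)) g ≤ n) ∧
    (∀ h : H, (cayley T).dist (f (F h)) h ≤ n)

/-- `f : G → H` is a quasi-isometry for the word metrics: for some `n > 0` it is an
`n`-quasi-isometric embedding and `n`-quasi-surjective. -/
def IsQI {G H : Type*} [Group G] [Group H] (S : Set G) (T : Set H) (f : G → H) : Prop :=
  ∃ n : ℕ, 0 < n ∧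
    (∀ x y : G,
      ((cayley S).dist x y : ℝ) / n - n ≤ ((cayley T).dist (f x) (f y) : ℝ) ∧
      ((cayley T).dist (f x) (f y) : ℝ) ≤ n * ((cayley S).dist x y : ℝ) + n) ∧
    (∀ h : H, ∃ g : G, (cayley T).dist (f g) h ≤ n)

/-- An elementary homotopy move between words over `S`: replace a subword `v` of length at
most `K` by a word `v'` of length at most `K` representing the same element of `G`. -/
def ElemMove {G : Type*} [Group G] (S : Finset G) (K : ℕ) (w₁ w₂ : List ↥S) : Prop :=
  ∃ u v v' x : List ↥S, w₁ = u ++ v ++ x ∧ w₂ = u ++ v' ++ x ∧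
    v.length ≤ K ∧ v'.length ≤ K ∧ wordProd S v = wordProd S v'

/-- `G` is presented over the (symmetric) generating set `S` by relators of length at most
`K`: any two words over `S` representing the same element of `G` are connected by a finite
sequence of elementary moves of size at most `K`. -/
def PresentedBy {G : Type*} [Group G] (S : Finset G) (K : ℕ) : Prop :=
  ∀ w w' : List ↥S, wordProd S w = wordProd S w' →
    Relation.ReflTransGen (ElemMove S K) w w'

/-- `X ⊆ A^G` is a subshift of finite type: there is a finite family of forbidden patterns
`p i : F i → A` (`F i ⊆ G` finite) such that `X` consists exactly of those `σ` for which no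
translate `σ·g = (x ↦ σ (g * x))` restricts on `F i` to `p i`. -/
def IsSFT {G A : Type*} [Group G] (X : Set (G → A)) : Prop :=
  ∃ (ι : Type) (_ : Finite ι) (F : ι → Finset G) (p : (i : ι) → (↥(F i) → A)),
    X = {σ : G → A | ∀ (g : G) (i : ι), ∃ x : ↥(F i), σ (g * ↑x) ≠ p i x}

namespace Stmt17Aux

variable {G : Type*} [Group G]

@[simp] lemma wordProd_nil (S : Finset G) : wordProd S ([] : List ↥S) = 1 := rfl

@[simp] lemma wordProd_cons (S : Finset G) (s : ↥S) (w : List ↥S) :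
    wordProd S (s :: w) = (s : G) * wordProd S w := by
  simp [wordProd]

lemma wordProd_append (S : Finset G) (w₁ w₂ : List ↥S) :
    wordProd S (w₁ ++ w₂) = wordProd S w₁ * wordProd S w₂ := by
  simp [wordProd]

lemma cayley_adj {S' : Set G} {x y : G} :
    (cayley S').Adj x y ↔ x ≠ y ∧ (x⁻¹ * y ∈ S' ∨ y⁻¹ * x ∈ S') := Iff.rfl

lemma cayley_adj_mul_left {S' : Set G} (a : G) {x y : G} (h : (cayley S').Adj x y) :
    (cayley S').Adj (a * x) (a * y) := by
  rw [cayley_adj] at h ⊢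
  refine ⟨fun e => h.1 (by simpa using e), ?_⟩
  simpa [mul_assoc] using h.2

/-- left multiplication as a graph hom of the Cayley graph -/
def mulLeftHom (S' : Set G) (a : G) : cayley S' →g cayley S' where
  toFun := fun x => a * x
  map_rel' := fun h => cayley_adj_mul_left a h

lemma cayley_reachable_mul_left {S' : Set G} (a : G) {x y : G}
    (h : (cayley S').Reachable x y) : (cayley S').Reachable (a * x) (a * y) := by
  obtain ⟨p⟩ := h
  exact ⟨p.map (mulLeftHom S' a)⟩

lemma cayley_dist_mul_left (S' : Set G) (a x y : G) :
    (cayley S').dist (a * x) (a * y) = (cayley S').dist x y := by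
  have key : ∀ (b u v : G), (cayley S').dist (b * u) (b * v) ≤ (cayley S').dist u v := by
    intro b u v
    by_cases hr : (cayley S').Reachable u v
    · obtain ⟨p, hp⟩ := hr.exists_walk_length_eq_dist
      calc (cayley S').dist (b * u) (b * v) ≤ (p.map (mulLeftHom S' b)).length :=
            SimpleGraph.dist_le _
        _ = (cayley S').dist u v := by rw [SimpleGraph.Walk.length_map, hp]
    · by_cases hr2 : (cayley S').Reachable (b * u) (b * v)
      · exact absurd (by simpa [mul_assoc] using cayley_reachable_mul_left b⁻¹ hr2) hr
      · simp [SimpleGraph.dist_eq_zero_of_not_reachable hr2]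
  refine le_antisymm (key a x y) ?_
  have := key a⁻¹ (a * x) (a * y)
  simpa [mul_assoc] using this

variable {S : Finset G}

lemma exists_word_of_walk (hSsym : ∀ s ∈ S, s⁻¹ ∈ S) {x y : G}
    (p : (cayley (S : Set G)).Walk x y) :
    ∃ w : List ↥S, w.length = p.length ∧ x * wordProd S w = y := by
  induction p with
  | nil => exact ⟨[], rfl, by simp⟩
  | @cons u v y hadj p ih =>
    obtain ⟨w, hw, hprod⟩ := ih
    rw [cayley_adj] at hadj
    have hs : u⁻¹ * v ∈ S := by
      rcases hadj.2 with h | h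
      · exact h
      · simpa using hSsym _ h
    refine ⟨⟨u⁻¹ * v, hs⟩ :: w, by simp [hw], ?_⟩
    rw [wordProd_cons]
    simpa [mul_assoc] using hprod

lemma reachable_mul_word (w : List ↥S) (x : G) :
    (cayley (S : Set G)).Reachable x (x * wordProd S w) := by
  induction w generalizing x with
  | nil => simpa using SimpleGraph.Reachable.refl x
  | cons s w ih =>
    have h1 : (cayley (S : Set G)).Reachable x (x * (s : G)) := by
      by_cases he : x = x * (s : G)
      · rw [← he]
      · exact (SimpleGraph.Adj.reachable (by rw [cayley_adj]; exact ⟨he, Or.inl (by simp [s.2])⟩))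
    rw [wordProd_cons, ← mul_assoc]
    exact h1.trans (ih (x * (s : G)))

def invLetter (hSsym : ∀ s ∈ S, s⁻¹ ∈ S) : ↥S → ↥S :=
  fun t => ⟨(t : G)⁻¹, hSsym t.1 t.2⟩

lemma wordProd_reverse_map_inv (hSsym : ∀ s ∈ S, s⁻¹ ∈ S) (w : List ↥S) :
    wordProd S (w.reverse.map (invLetter hSsym)) = (wordProd S w)⁻¹ := by
  induction w with
  | nil => simp
  | cons s w ih =>
    rw [List.reverse_cons, List.map_append, wordProd_append, ih, wordProd_cons]
    simp [invLetter]

lemma exists_word_of_mem_closure (hSsym : ∀ s ∈ S, s⁻¹ ∈ S) {g : G}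
    (hg : g ∈ Subgroup.closure (S : Set G)) : ∃ w : List ↥S, wordProd S w = g := by
  induction hg using Subgroup.closure_induction with
  | mem s hs => exact ⟨[⟨s, hs⟩], by simp⟩
  | one => exact ⟨[], rfl⟩
  | mul a b _ _ iha ihb =>
    obtain ⟨wa, hwa⟩ := iha; obtain ⟨wb, hwb⟩ := ihb
    exact ⟨wa ++ wb, by rw [wordProd_append, hwa, hwb]⟩
  | inv a _ iha =>
    obtain ⟨wa, hwa⟩ := iha
    exact ⟨wa.reverse.map (invLetter hSsym), by rw [wordProd_reverse_map_inv, hwa]⟩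

lemma cayley_connected (hSsym : ∀ s ∈ S, s⁻¹ ∈ S)
    (hSgen : Subgroup.closure (S : Set G) = ⊤) : (cayley (S : Set G)).Connected := by
  rw [SimpleGraph.connected_iff]
  refine ⟨fun x y => ?_, ⟨1⟩⟩
  obtain ⟨w, hw⟩ := exists_word_of_mem_closure hSsym
    (hSgen ▸ Subgroup.mem_top (x⁻¹ * y) : x⁻¹ * y ∈ Subgroup.closure (S : Set G))
  have := reachable_mul_word w x
  rwa [hw, mul_inv_cancel_left] at this

lemma dist_mul_word_le (hconn : (cayley (S : Set G)).Connected) (x : G) (w : List ↥S) :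
    (cayley (S : Set G)).dist x (x * wordProd S w) ≤ w.length := by
  induction w generalizing x with
  | nil => simp
  | cons s w ih =>
    have h1 : (cayley (S : Set G)).dist x (x * (s : G)) ≤ 1 := by
      by_cases he : x = x * (s : G)
      · rw [← he]; simp [SimpleGraph.dist_self]
      · exact le_of_eq (SimpleGraph.dist_eq_one_iff_adj.2 (by rw [cayley_adj]; exact ⟨he, Or.inl (by simp [s.2])⟩))
    calc (cayley (S : Set G)).dist x (x * wordProd S (s :: w))
        ≤ (cayley (S : Set G)).dist x (x * (s : G)) +
          (cayley (S : Set G)).dist (x * (s : G)) (x * wordProd S (s :: w)) :=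
          hconn.dist_triangle
      _ ≤ 1 + w.length := by
          refine add_le_add h1 ?_
          simpa [wordProd_cons, mul_assoc] using ih (x * (s : G))
      _ = (s :: w).length := by simp [add_comm]

lemma exists_word_of_dist (hSsym : ∀ s ∈ S, s⁻¹ ∈ S)
    (hconn : (cayley (S : Set G)).Connected) (x y : G) :
    ∃ w : List ↥S, w.length = (cayley (S : Set G)).dist x y ∧ x * wordProd S w = y := by
  obtain ⟨p, hp⟩ := hconn.exists_walk_length_eq_dist x y
  obtain ⟨w, hw, hprod⟩ := exists_word_of_walk hSsym p
  exact ⟨w, hw.trans hp, hprod⟩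

lemma one_mem_ball (S' : Set G) (r : ℕ) : (1 : G) ∈ ball S' r 1 := by
  simp only [ball, Set.mem_setOf_eq, SimpleGraph.dist_self]
  exact Nat.zero_le r

lemma exists_word_of_mem_ball (hSsym : ∀ s ∈ S, s⁻¹ ∈ S)
    (hconn : (cayley (S : Set G)).Connected) {r : ℕ} {x : G}
    (hx : x ∈ ball (S : Set G) r 1) : ∃ w : List ↥S, w.length ≤ r ∧ wordProd S w = x := by
  obtain ⟨w, hw, hprod⟩ := exists_word_of_dist hSsym hconn 1 x
  exact ⟨w, hw ▸ hx, by simpa using hprod⟩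

lemma mem_ball_of_word (hconn : (cayley (S : Set G)).Connected) {r : ℕ} (w : List ↥S)
    (hw : w.length ≤ r) : wordProd S w ∈ ball (S : Set G) r 1 := by
  have := dist_mul_word_le hconn 1 w
  simp only [one_mul] at this
  exact le_trans this hw

lemma ball_finite (hSsym : ∀ s ∈ S, s⁻¹ ∈ S)
    (hconn : (cayley (S : Set G)).Connected) (r : ℕ) :
    (ball (S : Set G) r (1 : G)).Finite := by
  have h1 : (ball (S : Set G) r (1 : G)) ⊆
      (fun w : List ↥S => wordProd S w) '' {w : List ↥S | w.length ≤ r} := by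
    intro x hx
    obtain ⟨w, hw, hprod⟩ := exists_word_of_mem_ball hSsym hconn hx
    exact ⟨w, hw, hprod⟩
  exact Set.Finite.subset (Set.Finite.image _ (List.finite_length_le ↥S r)) h1

section sintsec
variable {H : Type*} [Group H]

@[simp] lemma sint_nil (σ : G → ↥S → H) (g : G) : sint σ g [] = 1 := rfl

@[simp] lemma sint_cons (σ : G → ↥S → H) (g : G) (s : ↥S) (w : List ↥S) :
    sint σ g (s :: w) = σ g s * sint σ (g * (s : G)) w := rfl

lemma sint_append (σ : G → ↥S → H) (g : G) (w₁ w₂ : List ↥S) :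
    sint σ g (w₁ ++ w₂) = sint σ g w₁ * sint σ (g * wordProd S w₁) w₂ := by
  induction w₁ generalizing g with
  | nil => simp
  | cons s w ih => simp [ih, mul_assoc]

lemma sint_eq_of_deriv {σ : G → ↥S → H} {φ : G → H}
    (hφ : ∀ (x : G) (s : ↥S), σ x s = (φ x)⁻¹ * φ (x * (s : G))) (g : G) (w : List ↥S) :
    sint σ g w = (φ g)⁻¹ * φ (g * wordProd S w) := by
  induction w generalizing g with
  | nil => simp
  | cons s w ih => simp [hφ, ih, mul_assoc]

lemma sint_translate (σ : G → ↥S → H) (g a : G) (w : List ↥S) :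
    sint (fun x => σ (g * x)) a w = sint σ (g * a) w := by
  induction w generalizing a with
  | nil => simp
  | cons s w ih => simp [ih, mul_assoc]

lemma sint_congr {σ σ' : G → ↥S → H} (w : List ↥S) (a : G)
    (h : ∀ u : List ↥S, u.length ≤ w.length → σ (a * wordProd S u) = σ' (a * wordProd S u)) :
    sint σ a w = sint σ' a w := by
  induction w generalizing a with
  | nil => simp
  | cons s w ih =>
    have h0 : σ a = σ' a := by simpa using h [] (by simp)
    have h1 : sint σ (a * (s : G)) w = sint σ' (a * (s : G)) w := by
      refine ih (a * (s : G)) (fun u hu => ?_)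
      have := h (s :: u) (by simpa using hu)
      simpa [mul_assoc] using this
    simp [h0, h1]

end sintsec
end Stmt17Aux

namespace Part2

open Classical in
noncomputable def pen {H : Type*} [One H] (n : ℕ) (t : H) : ℕ := if t = 1 then 0 else n

lemma pen_le {H : Type*} [One H] (n : ℕ) (t : H) : pen n t ≤ n := by
  unfold pen; split
  · exact Nat.zero_le n
  · exact le_refl n

lemma pen_one {H : Type*} [One H] (n : ℕ) : pen n (1 : H) = 0 := by
  simp [pen]

variable {G H : Type*} [Group G] [Group H]

/-- The alphabet. -/
abbrev Alph (S : Finset G) (T : Finset H) (n : ℕ) :=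
  (↥S → ↥(ball (T : Set H) n 1)) × (↥(ball (T : Set H) n 1) → ↥(ball (S : Set G) (n^2+n) 1))

def sig1 {S : Finset G} {T : Finset H} {n : ℕ} (τ : G → Alph S T n) : G → ↥S → H :=
  fun x s => ((τ x).1 s : H)

def k1 (T : Finset H) (n : ℕ) : ↥(ball (T : Set H) n 1) := ⟨1, Stmt17Aux.one_mem_ball _ _⟩

@[simp] lemma k1_coe (T : Finset H) (n : ℕ) : ((k1 T n : ↥(ball (T : Set H) n 1)) : H) = 1 := rfl

def vmap {S : Finset G} {T : Finset H} {n : ℕ} (σ : G → Alph S T n) (g : G)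
    (k : ↥(ball (T : Set H) n 1)) : G := g * ((σ g).2 k : G)

open Stmt17Aux

def basePt (T : Finset H) (n : ℕ) : G × ↥(ball (T : Set H) n 1) := (1, k1 T n)

@[simp] lemma basePt_fst (T : Finset H) (n : ℕ) : (basePt T n : G × _).1 = (1:G) := rfl
@[simp] lemma basePt_snd_coe (T : Finset H) (n : ℕ) :
    (((basePt T n : G × ↥(ball (T : Set H) n 1)).2 : ↥(ball (T : Set H) n 1))) = k1 T n := rfl

lemma dist_one_mul (S' : Set G) (a x : G) :
    (cayley S').dist a (a * x) = (cayley S').dist 1 x := by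
  simpa using cayley_dist_mul_left S' a 1 x

lemma dist_mul_mul (S' : Set G) (a x y : G) :
    (cayley S').dist (a * x) (a * y) = (cayley S').dist x y :=
  cayley_dist_mul_left S' a x y

lemma mem_ball_dist {S' : Set G} {r : ℕ} (k : ↥(ball S' r (1:G))) :
    (cayley S').dist 1 (k : G) ≤ r := k.2

lemma sint_sig1_translate {S : Finset G} {T : Finset H} {n : ℕ} (σ : G → Alph S T n)
    (g a : G) (w : List ↥S) :
    sint (sig1 (fun x => σ (g * x))) a w = sint (sig1 σ) (g * a) w :=
  sint_translate (sig1 σ) g a w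

/-- The local condition at base point `1`. -/
def LC (S : Finset G) (T : Finset H) (n KG D : ℕ) (τ : G → Alph S T n) : Prop :=
  (∀ v v' : List ↥S, v.length ≤ KG → v'.length ≤ KG → wordProd S v = wordProd S v' →
     sint (sig1 τ) 1 v = sint (sig1 τ) 1 v')
  ∧ ((cayley (S : Set G)).dist 1 ((τ 1).2 (k1 T n) : G) ≤ n)
  ∧ (∀ (k : ↥(ball (T : Set H) n 1)) (w : List ↥S), w.length ≤ n^2+n →
       wordProd S w = ((τ 1).2 k : G) →
       (cayley (T : Set H)).dist (sint (sig1 τ) 1 w) (k : H) ≤ n)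
  ∧ (∀ (k : ↥(ball (T : Set H) n 1)) (t : ↥T), ∃ w : List ↥S, w.length ≤ n^2+n+n ∧
       ∃ k' : ↥(ball (T : Set H) n 1), (k : H) * (t : H) = sint (sig1 τ) 1 w * (k' : H))
  ∧ (∀ u : List ↥S, u.length ≤ D → ∀ (k k' : ↥(ball (T : Set H) n 1)) (t : H),
       (t ∈ (T : Set H) ∨ t = 1) → (k : H) * t = sint (sig1 τ) 1 u * (k' : H) →
       (cayley (S : Set G)).dist ((τ 1).2 k : G)
         (wordProd S u * ((τ (wordProd S u)).2 k' : G)) ≤ pen n t)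

/-- Bundled context for the reconstruction of `(f, F)` from a locally admissible `σ`. -/
structure Ctx (S : Finset G) (T : Finset H) (n KG KH D : ℕ) where
  σ : G → Alph S T n
  hSsym : ∀ s ∈ S, s⁻¹ ∈ S
  hTsym : ∀ t ∈ T, t⁻¹ ∈ T
  hconnS : (cayley (S : Set G)).Connected
  hconnT : (cayley (T : Set H)).Connected
  hSgen : Subgroup.closure (S : Set G) = ⊤
  hTgen : Subgroup.closure (T : Set H) = ⊤
  presT : PresentedBy T KH
  hD : 2*KH*(n^2+n+n) + n*(n^2+n+n) + 4*(n^2+n) + 2*n + 2 ≤ D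
  f : G → H
  f1 : f 1 = 1
  fw : ∀ (g : G) (w : List ↥S), f (g * wordProd S w) = f g * sint (sig1 σ) g w
  gcfix : ∀ g : G, (cayley (S : Set G)).dist g (vmap σ g (k1 T n)) ≤ n
  gcqi : ∀ (g : G) (k : ↥(ball (T : Set H) n 1)) (w : List ↥S), w.length ≤ n^2+n →
     g * wordProd S w = vmap σ g k →
     (cayley (T : Set H)).dist (sint (sig1 σ) g w) (k : H) ≤ n
  gcsurj : ∀ (g : G) (k : ↥(ball (T : Set H) n 1)) (t : ↥T),
     ∃ w : List ↥S, w.length ≤ n^2+n+n ∧ ∃ k' : ↥(ball (T : Set H) n 1),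
       (k : H) * (t : H) = sint (sig1 σ) g w * (k' : H)
  gccoh : ∀ (g : G) (u : List ↥S), u.length ≤ D →
     ∀ (k k' : ↥(ball (T : Set H) n 1)) (t : H), (t ∈ (T : Set H) ∨ t = 1) →
     (k : H) * t = sint (sig1 σ) g u * (k' : H) →
     (cayley (S : Set G)).dist (vmap σ g k) (vmap σ (g * wordProd S u) k') ≤ pen n t

namespace Ctx

variable {S : Finset G} {T : Finset H} {n KG KH D : ℕ} (c : Ctx S T n KG KH D)

/-- one `Csurj`-propagation step along a letter `t`. -/
def Step (t : ↥T) (p q : G × ↥(ball (T : Set H) n 1)) : Prop :=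
  ∃ w : List ↥S, w.length ≤ n^2+n+n ∧ q.1 = p.1 * wordProd S w ∧
    (p.2 : H) * (t : H) = sint (sig1 c.σ) p.1 w * (q.2 : H)

/-- propagation along a word over `T`. -/
def Ext (c : Ctx S T n KG KH D) : List ↥T → (G × ↥(ball (T : Set H) n 1)) →
    (G × ↥(ball (T : Set H) n 1)) → Prop
  | [], p, q => q = p
  | t :: x, p, q => ∃ p', c.Step t p p' ∧ Ext c x p' q

/-- the candidate value of `F` encoded at a representative `p`. -/
def vm (p : G × ↥(ball (T : Set H) n 1)) : G := vmap c.σ p.1 p.2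

lemma fd (g : G) (s : ↥S) : c.f (g * (s : G)) = c.f g * ((c.σ g).1 s : H) := by
  have := c.fw g [s]
  simpa [sig1] using this

lemma dist_vm (p : G × ↥(ball (T : Set H) n 1)) :
    (cayley (S : Set G)).dist p.1 (c.vm p) ≤ n^2+n := by
  have h := mem_ball_dist ((c.σ p.1).2 p.2)
  rw [vm, vmap, dist_one_mul (S : Set G) p.1]
  exact h

lemma ext_concat : ∀ (x : List ↥T) {y : List ↥T} {p q r : G × ↥(ball (T : Set H) n 1)},
    c.Ext x p q → c.Ext y q r → c.Ext (x ++ y) p r := by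
  intro x
  induction x with
  | nil =>
    intro y p q r h1 h2
    have : q = p := h1
    rw [← this]; exact h2
  | cons t x ih =>
    intro y p q r h1 h2
    obtain ⟨p', hs, he⟩ := h1
    exact ⟨p', hs, ih he h2⟩

lemma ext_deconcat : ∀ (x : List ↥T) {y : List ↥T} {p r : G × ↥(ball (T : Set H) n 1)},
    c.Ext (x ++ y) p r → ∃ q, c.Ext x p q ∧ c.Ext y q r := by
  intro x
  induction x with
  | nil => intro y p r h; exact ⟨p, rfl, h⟩
  | cons t x ih =>
    intro y p r h
    obtain ⟨p', hs, he⟩ := h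
    obtain ⟨q, h1, h2⟩ := ih he
    exact ⟨q, ⟨p', hs, h1⟩, h2⟩

lemma ext_fk : ∀ (x : List ↥T) {p q : G × ↥(ball (T : Set H) n 1)}, c.Ext x p q →
    c.f q.1 * (q.2 : H) = c.f p.1 * (p.2 : H) * wordProd T x := by
  intro x
  induction x with
  | nil =>
    intro p q h
    have : q = p := h
    rw [this]; simp
  | cons t x ih =>
    intro p q h
    obtain ⟨p', ⟨w, _, hq1, heq⟩, he⟩ := h
    have hfp' : c.f p'.1 * (p'.2 : H) = c.f p.1 * (p.2 : H) * (t : H) := by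
      rw [hq1, c.fw, mul_assoc (c.f p.1), ← heq]
      group
    rw [ih he, hfp', wordProd_cons]
    group

lemma ext_dist : ∀ (x : List ↥T) {p q : G × ↥(ball (T : Set H) n 1)}, c.Ext x p q →
    (cayley (S : Set G)).dist p.1 q.1 ≤ x.length * (n^2+n+n) := by
  intro x
  induction x with
  | nil =>
    intro p q h
    have : q = p := h
    rw [this]; simp [SimpleGraph.dist_self]
  | cons t x ih =>
    intro p q h
    obtain ⟨p', ⟨w, hwlen, hq1, heq⟩, he⟩ := h
    calc (cayley (S : Set G)).dist p.1 q.1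
        ≤ (cayley (S : Set G)).dist p.1 p'.1 + (cayley (S : Set G)).dist p'.1 q.1 :=
          c.hconnS.dist_triangle
      _ ≤ (n^2+n+n) + x.length * (n^2+n+n) := by
          refine add_le_add ?_ (ih he)
          rw [hq1]
          exact le_trans (dist_mul_word_le c.hconnS p.1 w) hwlen
      _ = (x.length + 1) * (n^2+n+n) := by ring
      _ = (t :: x).length * (n^2+n+n) := by simp

lemma ext_exists : ∀ (x : List ↥T) (p : G × ↥(ball (T : Set H) n 1)),
    ∃ q, c.Ext x p q := by
  intro x
  induction x with
  | nil => intro p; exact ⟨p, rfl⟩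
  | cons t x ih =>
    intro p
    obtain ⟨w, hwlen, k', heq⟩ := c.gcsurj p.1 p.2 t
    obtain ⟨q, hq⟩ := ih (p.1 * wordProd S w, k')
    exact ⟨q, (p.1 * wordProd S w, k'), ⟨w, hwlen, rfl, heq⟩, hq⟩

/-- merging two representatives of the same element of `H`. -/
lemma merge {p p' : G × ↥(ball (T : Set H) n 1)}
    (hfk : c.f p.1 * (p.2 : H) = c.f p'.1 * (p'.2 : H))
    (hdist : (cayley (S : Set G)).dist p.1 p'.1 ≤ D) : c.vm p = c.vm p' := by
  obtain ⟨u, hulen, huprod⟩ := exists_word_of_dist c.hSsym c.hconnS p.1 p'.1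
  have heq : (p.2 : H) * 1 = sint (sig1 c.σ) p.1 u * (p'.2 : H) := by
    have hfu := c.fw p.1 u
    rw [huprod] at hfu
    have hs : sint (sig1 c.σ) p.1 u = (c.f p.1)⁻¹ * c.f p'.1 := by
      rw [hfu]; group
    rw [hs, mul_one, mul_assoc, ← hfk]
    group
  have h := c.gccoh p.1 u (le_trans (le_of_eq hulen) hdist) p.2 p'.2 1 (Or.inr rfl) heq
  rw [pen_one, Nat.le_zero] at h
  have hreach := (c.hconnS (vmap c.σ p.1 p.2) (vmap c.σ (p.1 * wordProd S u) p'.2))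
  have h2 := (SimpleGraph.Reachable.dist_eq_zero_iff hreach).1 h
  rw [vm, vm, h2, huprod]

lemma mergeT {p p' : G × ↥(ball (T : Set H) n 1)} {t : H} (ht : t ∈ (T : Set H))
    (hfk : c.f p.1 * (p.2 : H) * t = c.f p'.1 * (p'.2 : H))
    (hdist : (cayley (S : Set G)).dist p.1 p'.1 ≤ D) :
    (cayley (S : Set G)).dist (c.vm p) (c.vm p') ≤ n := by
  obtain ⟨u, hulen, huprod⟩ := exists_word_of_dist c.hSsym c.hconnS p.1 p'.1
  have heq : (p.2 : H) * t = sint (sig1 c.σ) p.1 u * (p'.2 : H) := by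
    have hfu := c.fw p.1 u
    rw [huprod] at hfu
    have hs : sint (sig1 c.σ) p.1 u = (c.f p.1)⁻¹ * c.f p'.1 := by
      rw [hfu]; group
    rw [hs, mul_assoc, ← hfk]
    group
  have h := c.gccoh p.1 u (le_trans (le_of_eq hulen) hdist) p.2 p'.2 t (Or.inl ht) heq
  rw [vm, vm, ← huprod]
  exact le_trans h (pen_le n t)

lemma step_fk {t : ↥T} {p q : G × ↥(ball (T : Set H) n 1)} (h : c.Step t p q) :
    c.f q.1 * (q.2 : H) = c.f p.1 * (p.2 : H) * (t : H) := by
  obtain ⟨w, _, hq1, heq⟩ := h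
  rw [hq1, c.fw, mul_assoc (c.f p.1), ← heq]
  group

lemma step_dist {t : ↥T} {p q : G × ↥(ball (T : Set H) n 1)} (h : c.Step t p q) :
    (cayley (S : Set G)).dist p.1 q.1 ≤ n^2+n+n := by
  obtain ⟨w, hwlen, hq1, heq⟩ := h
  rw [hq1]
  exact le_trans (dist_mul_word_le c.hconnS p.1 w) hwlen

lemma dist_one_le_of_mem {S' : Set G} {s : G} (hs : s ∈ S') : (cayley S').dist 1 s ≤ 1 := by
  by_cases h1 : (1 : G) = s
  · rw [← h1]; simp [SimpleGraph.dist_self]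
  · refine le_of_eq (SimpleGraph.dist_eq_one_iff_adj.2 ?_)
    rw [cayley_adj]
    exact ⟨h1, Or.inl (by simpa using hs)⟩

/-- parallel propagation of merged representatives. -/
lemma parlist : ∀ (x : List ↥T) {p p' q q' : G × ↥(ball (T : Set H) n 1)},
    c.Ext x p q → c.Ext x p' q' →
    c.f p.1 * (p.2 : H) = c.f p'.1 * (p'.2 : H) → c.vm p = c.vm p' →
    c.f q.1 * (q.2 : H) = c.f q'.1 * (q'.2 : H) ∧ c.vm q = c.vm q' := by
  intro x
  induction x with
  | nil =>
    intro p p' q q' h h' hfk hvm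
    have e : q = p := h
    have e' : q' = p' := h'
    rw [e, e']; exact ⟨hfk, hvm⟩
  | cons t x ih =>
    intro p p' q q' h h' hfk hvm
    obtain ⟨r, hs, he⟩ := h
    obtain ⟨r', hs', he'⟩ := h'
    have hfkr : c.f r.1 * (r.2 : H) = c.f r'.1 * (r'.2 : H) := by
      rw [c.step_fk hs, c.step_fk hs', hfk]
    have hdr : (cayley (S : Set G)).dist r.1 r'.1 ≤ D := by
      have h1 := c.step_dist hs
      have h2 := c.step_dist hs'
      have h3 := c.dist_vm p
      have h4 := c.dist_vm p'
      have htri : (cayley (S : Set G)).dist r.1 r'.1 ≤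
          (cayley (S : Set G)).dist r.1 p.1 + ((cayley (S : Set G)).dist p.1 (c.vm p) +
            ((cayley (S : Set G)).dist (c.vm p') p'.1 + (cayley (S : Set G)).dist p'.1 r'.1)) := by
        calc (cayley (S : Set G)).dist r.1 r'.1
            ≤ (cayley (S : Set G)).dist r.1 p.1 + (cayley (S : Set G)).dist p.1 r'.1 :=
              c.hconnS.dist_triangle
          _ ≤ (cayley (S : Set G)).dist r.1 p.1 + ((cayley (S : Set G)).dist p.1 (c.vm p) +
                (cayley (S : Set G)).dist (c.vm p) r'.1) := by
              exact add_le_add_right c.hconnS.dist_triangle _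
          _ ≤ _ := by
              refine add_le_add_right (add_le_add_right ?_ _) _
              rw [hvm]
              exact c.hconnS.dist_triangle
      rw [SimpleGraph.dist_comm (G := cayley (S:Set G)) (u := r.1) (v := p.1)] at htri
      rw [SimpleGraph.dist_comm (G := cayley (S:Set G)) (u := c.vm p') (v := p'.1)] at htri
      refine le_trans htri (le_trans ?_ c.hD)
      nlinarith [Nat.zero_le (2*KH*(n^2+n+n))]
    have hvmr : c.vm r = c.vm r' := c.merge hfkr hdr
    exact ih he he' hfkr hvmr

noncomputable def VF (x : List ↥T) : G := c.vm (Classical.choose (c.ext_exists x (basePt T n)))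

lemma ext_base (x : List ↥T) : c.Ext x (basePt T n) (Classical.choose (c.ext_exists x (basePt T n))) :=
  Classical.choose_spec (c.ext_exists x (basePt T n))

lemma vf_spec {x : List ↥T} {q : G × ↥(ball (T : Set H) n 1)} (h : c.Ext x (basePt T n) q) :
    c.vm q = c.VF x :=
  (c.parlist x h (c.ext_base x) rfl rfl).2

lemma ext_fk_base {x : List ↥T} {q : G × ↥(ball (T : Set H) n 1)} (h : c.Ext x (basePt T n) q) :
    c.f q.1 * (q.2 : H) = wordProd T x := by
  rw [c.ext_fk x h]
  simp [basePt, c.f1]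

lemma vf_elem {x x' : List ↥T} (hmove : ElemMove T KH x x') : c.VF x = c.VF x' := by
  obtain ⟨u, v, v', z, hx, hx', hvl, hvl', hvv⟩ := hmove
  obtain ⟨a, ha⟩ := c.ext_exists u (basePt T n)
  obtain ⟨b, hb⟩ := c.ext_exists v a
  obtain ⟨b', hb'⟩ := c.ext_exists v' a
  have hfkb : c.f b.1 * (b.2 : H) = c.f b'.1 * (b'.2 : H) := by
    rw [c.ext_fk v hb, c.ext_fk v' hb', hvv]
  have hdb : (cayley (S : Set G)).dist b.1 b'.1 ≤ D := by
    have h1 := c.ext_dist v hb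
    have h2 := c.ext_dist v' hb'
    have htri : (cayley (S : Set G)).dist b.1 b'.1 ≤
        (cayley (S : Set G)).dist a.1 b.1 + (cayley (S : Set G)).dist a.1 b'.1 := by
      rw [SimpleGraph.dist_comm (G := cayley (S:Set G)) (u := a.1) (v := b.1)]
      exact c.hconnS.dist_triangle
    refine le_trans htri (le_trans ?_ c.hD)
    have hv1 : v.length * (n^2+n+n) ≤ KH * (n^2+n+n) := Nat.mul_le_mul_right _ hvl
    have hv2 : v'.length * (n^2+n+n) ≤ KH * (n^2+n+n) := Nat.mul_le_mul_right _ hvl'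
    nlinarith [Nat.zero_le (n*(n^2+n+n)), Nat.zero_le (4*(n^2+n) + 2*n + 2)]
  have hvmb : c.vm b = c.vm b' := c.merge hfkb hdb
  obtain ⟨e, he⟩ := c.ext_exists z b
  obtain ⟨e', he'⟩ := c.ext_exists z b'
  have hpar := c.parlist z he he' hfkb hvmb
  have hx1 : c.Ext (u ++ v ++ z) (basePt T n) e := c.ext_concat (u ++ v) (c.ext_concat u ha hb) he
  have hx2 : c.Ext (u ++ v' ++ z) (basePt T n) e' := c.ext_concat (u ++ v') (c.ext_concat u ha hb') he'
  rw [hx, hx', ← c.vf_spec hx1, ← c.vf_spec hx2]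
  exact hpar.2

lemma elemMove_prod {K : ℕ} {x x' : List ↥T} (h : ElemMove T K x x') :
    wordProd T x = wordProd T x' := by
  obtain ⟨u, v, v', z, hx, hx', _, _, hvv⟩ := h
  rw [hx, hx', wordProd_append, wordProd_append, wordProd_append, wordProd_append, hvv]

lemma vf_eq {x x' : List ↥T} (h : wordProd T x = wordProd T x') : c.VF x = c.VF x' := by
  have hchain := c.presT x x' h
  clear h
  induction hchain with
  | refl => rfl
  | tail hch hmove ih => rw [ih, c.vf_elem hmove]

lemma mem_closure_topT (c : Ctx S T n KG KH D) (h : H) :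
    h ∈ Subgroup.closure (T : Set H) := by
  rw [c.hTgen]; trivial

noncomputable def wordT (h : H) : List ↥T :=
  Classical.choose (exists_word_of_mem_closure c.hTsym (c.mem_closure_topT h))

lemma wordT_spec (h : H) : wordProd T (c.wordT h) = h :=
  Classical.choose_spec (exists_word_of_mem_closure c.hTsym (c.mem_closure_topT h))

noncomputable def FF (h : H) : G := c.VF (c.wordT h)

lemma FF_spec {x : List ↥T} {q : G × ↥(ball (T : Set H) n 1)} (h : c.Ext x (basePt T n) q) :
    c.FF (wordProd T x) = c.vm q := by
  rw [FF, c.vf_eq (c.wordT_spec (wordProd T x)), c.vf_spec h]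

lemma FF_one : c.FF 1 = vmap c.σ 1 (k1 T n) := by
  have h : c.Ext ([] : List ↥T) (basePt T n) (basePt T n) := rfl
  have h2 := c.FF_spec h
  simpa [vm, basePt] using h2

lemma mem_closure_topS (c : Ctx S T n KG KH D) (g : G) :
    g ∈ Subgroup.closure (S : Set G) := by
  rw [c.hSgen]; trivial

lemma dist_vmap_self (g : G) (k : ↥(ball (T : Set H) n 1)) :
    (cayley (S : Set G)).dist g (vmap c.σ g k) ≤ n^2+n := c.dist_vm (g, k)

/-- the main bridging lemma: `FF (f g * k)` is computed by the local data at `g`. -/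
lemma FF_f : ∀ g : G, c.FF (c.f g) = vmap c.σ g (k1 T n) := by
  have key : ∀ w : List ↥S, c.FF (c.f (wordProd S w)) = vmap c.σ (wordProd S w) (k1 T n) := by
    intro w
    induction w using List.reverseRecOn with
    | nil => simp only [wordProd_nil, c.f1]; exact c.FF_one
    | append_singleton w s ih =>
      rw [wordProd_append, wordProd_cons, wordProd_nil, mul_one]
      set g := wordProd S w with hg
      obtain ⟨q, hq⟩ := c.ext_exists (c.wordT (c.f g)) (basePt T n)
      have hvmq : c.vm q = vmap c.σ g (k1 T n) := by
        have h1 := c.FF_spec hq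
        rw [c.wordT_spec] at h1
        rw [← h1]; exact ih
      have hfkq : c.f q.1 * (q.2 : H) = c.f g := by
        rw [c.ext_fk_base hq, c.wordT_spec]
      obtain ⟨wc, hwclen, hwcprod⟩ := exists_word_of_mem_ball c.hTsym c.hconnT
        ((c.σ g).1 s).2
      obtain ⟨q₂, hq₂⟩ := c.ext_exists wc q
      have hext : c.Ext (c.wordT (c.f g) ++ wc) (basePt T n) q₂ :=
        c.ext_concat _ hq hq₂
      have hprod2 : wordProd T (c.wordT (c.f g) ++ wc) = c.f (g * (s:G)) := by
        rw [wordProd_append, c.wordT_spec, hwcprod, c.fd]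
      have hFF : c.FF (c.f (g * (s:G))) = c.vm q₂ := by
        rw [← hprod2]; exact c.FF_spec hext
      have hfkq₂ : c.f q₂.1 * (q₂.2 : H) = c.f (g * (s:G)) * ((k1 T n : _) : H) := by
        rw [c.ext_fk _ hq₂, hfkq, hwcprod, c.fd, k1_coe, mul_one]
      have hdist : (cayley (S : Set G)).dist q₂.1 (g * (s:G)) ≤ D := by
        have h1 : (cayley (S : Set G)).dist q.1 q₂.1 ≤ n * (n^2+n+n) :=
          le_trans (c.ext_dist wc hq₂) (Nat.mul_le_mul_right _ hwclen)
        have h2 : (cayley (S : Set G)).dist q.1 (c.vm q) ≤ n^2+n := c.dist_vm q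
        have h3 : (cayley (S : Set G)).dist g (vmap c.σ g (k1 T n)) ≤ n^2+n :=
          c.dist_vmap_self g (k1 T n)
        have h4 : (cayley (S : Set G)).dist g (g * (s:G)) ≤ 1 := by
          rw [dist_one_mul]
          exact dist_one_le_of_mem (by simpa using s.2)
        have htri : (cayley (S : Set G)).dist q₂.1 (g * (s:G)) ≤
            (cayley (S : Set G)).dist q.1 q₂.1 + ((cayley (S : Set G)).dist q.1 (c.vm q) +
              ((cayley (S : Set G)).dist g (vmap c.σ g (k1 T n)) +
                (cayley (S : Set G)).dist g (g * (s:G)))) := by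
          calc (cayley (S : Set G)).dist q₂.1 (g * (s:G))
              ≤ (cayley (S : Set G)).dist q₂.1 q.1 + (cayley (S : Set G)).dist q.1 (g * (s:G)) :=
                c.hconnS.dist_triangle
            _ ≤ (cayley (S : Set G)).dist q₂.1 q.1 + ((cayley (S : Set G)).dist q.1 (c.vm q) +
                  (cayley (S : Set G)).dist (c.vm q) (g * (s:G))) :=
                add_le_add_right c.hconnS.dist_triangle _
            _ ≤ (cayley (S : Set G)).dist q₂.1 q.1 + ((cayley (S : Set G)).dist q.1 (c.vm q) +
                  ((cayley (S : Set G)).dist (c.vm q) g +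
                    (cayley (S : Set G)).dist g (g * (s:G)))) := by
                refine add_le_add_right (add_le_add_right c.hconnS.dist_triangle _) _
            _ = _ := by
                rw [SimpleGraph.dist_comm (G := cayley (S:Set G)) (u := q₂.1) (v := q.1),
                  hvmq, SimpleGraph.dist_comm (G := cayley (S:Set G))
                    (u := vmap c.σ g (k1 T n)) (v := g)]
        refine le_trans htri (le_trans ?_ c.hD)
        nlinarith [Nat.zero_le (2*KH*(n^2+n+n))]
      have hmerge := c.merge (p := q₂) (p' := (g * (s:G), k1 T n)) hfkq₂ hdist
      rw [hFF, hmerge]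
      rfl
  intro g
  obtain ⟨w, hw⟩ := exists_word_of_mem_closure c.hSsym (c.mem_closure_topS g)
  rw [← hw]
  exact key w

lemma FF_vmap (g : G) (k : ↥(ball (T : Set H) n 1)) :
    c.FF (c.f g * (k : H)) = vmap c.σ g k := by
  obtain ⟨q, hq⟩ := c.ext_exists (c.wordT (c.f g)) (basePt T n)
  have hvmq : c.vm q = vmap c.σ g (k1 T n) := by
    have h1 := c.FF_spec hq
    rw [c.wordT_spec] at h1
    rw [← h1]; exact c.FF_f g
  have hfkq : c.f q.1 * (q.2 : H) = c.f g := by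
    rw [c.ext_fk_base hq, c.wordT_spec]
  obtain ⟨wk, hwklen, hwkprod⟩ := exists_word_of_mem_ball c.hTsym c.hconnT k.2
  obtain ⟨q₃, hq₃⟩ := c.ext_exists wk q
  have hext : c.Ext (c.wordT (c.f g) ++ wk) (basePt T n) q₃ := c.ext_concat _ hq hq₃
  have hprod2 : wordProd T (c.wordT (c.f g) ++ wk) = c.f g * (k : H) := by
    rw [wordProd_append, c.wordT_spec, hwkprod]
  have hFF : c.FF (c.f g * (k : H)) = c.vm q₃ := by
    rw [← hprod2]; exact c.FF_spec hext
  have hfkq₃ : c.f q₃.1 * (q₃.2 : H) = c.f g * (k : H) := by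
    rw [c.ext_fk _ hq₃, hfkq, hwkprod]
  have hdist : (cayley (S : Set G)).dist q₃.1 g ≤ D := by
    have h1 : (cayley (S : Set G)).dist q.1 q₃.1 ≤ n * (n^2+n+n) :=
      le_trans (c.ext_dist wk hq₃) (Nat.mul_le_mul_right _ hwklen)
    have h2 : (cayley (S : Set G)).dist q.1 (c.vm q) ≤ n^2+n := c.dist_vm q
    have h3 : (cayley (S : Set G)).dist g (vmap c.σ g (k1 T n)) ≤ n^2+n :=
      c.dist_vmap_self g (k1 T n)
    have htri : (cayley (S : Set G)).dist q₃.1 g ≤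
        (cayley (S : Set G)).dist q.1 q₃.1 + ((cayley (S : Set G)).dist q.1 (c.vm q) +
          (cayley (S : Set G)).dist g (vmap c.σ g (k1 T n))) := by
      calc (cayley (S : Set G)).dist q₃.1 g
          ≤ (cayley (S : Set G)).dist q₃.1 q.1 + (cayley (S : Set G)).dist q.1 g :=
            c.hconnS.dist_triangle
        _ ≤ (cayley (S : Set G)).dist q₃.1 q.1 + ((cayley (S : Set G)).dist q.1 (c.vm q) +
              (cayley (S : Set G)).dist (c.vm q) g) :=
            add_le_add_right c.hconnS.dist_triangle _
        _ = _ := by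
            rw [SimpleGraph.dist_comm (G := cayley (S:Set G)) (u := q₃.1) (v := q.1), hvmq,
              SimpleGraph.dist_comm (G := cayley (S:Set G))
                (u := vmap c.σ g (k1 T n)) (v := g)]
    refine le_trans htri (le_trans ?_ c.hD)
    nlinarith [Nat.zero_le (2*KH*(n^2+n+n))]
  have hmerge := c.merge (p := q₃) (p' := (g, k)) hfkq₃ hdist
  rw [hFF, hmerge]
  rfl

lemma FF_fix (g : G) : (cayley (S : Set G)).dist (c.FF (c.f g)) g ≤ n := by
  rw [c.FF_f g, SimpleGraph.dist_comm]
  exact c.gcfix g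

lemma FF_qinv (h : H) : (cayley (T : Set H)).dist (c.f (c.FF h)) h ≤ n := by
  obtain ⟨q, hq⟩ := c.ext_exists (c.wordT h) (basePt T n)
  have hFF : c.FF h = c.vm q := by
    have h1 := c.FF_spec hq
    rwa [c.wordT_spec] at h1
  have hfkq : c.f q.1 * (q.2 : H) = h := by
    rw [c.ext_fk_base hq, c.wordT_spec]
  obtain ⟨wv, hwvlen, hwvprod⟩ := exists_word_of_mem_ball c.hSsym c.hconnS
    ((c.σ q.1).2 q.2).2
  have hqi := c.gcqi q.1 q.2 wv hwvlen (by rw [hwvprod]; rfl)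
  have hfv : c.f (c.vm q) = c.f q.1 * sint (sig1 c.σ) q.1 wv := by
    rw [vm, vmap, ← hwvprod]
    exact c.fw q.1 wv
  rw [hFF, hfv, ← hfkq]
  rw [dist_mul_mul (T : Set H) (c.f q.1) _ _]
  exact hqi

lemma FF_lip_one (h : H) (t : H) (ht : t ∈ (T : Set H)) :
    (cayley (S : Set G)).dist (c.FF h) (c.FF (h * t)) ≤ n := by
  obtain ⟨q, hq⟩ := c.ext_exists (c.wordT h) (basePt T n)
  have hFF : c.FF h = c.vm q := by
    have h1 := c.FF_spec hq
    rwa [c.wordT_spec] at h1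
  have hfkq : c.f q.1 * (q.2 : H) = h := by
    rw [c.ext_fk_base hq, c.wordT_spec]
  set tT : ↥T := ⟨t, ht⟩ with htT
  obtain ⟨w, hwlen, k', heq⟩ := c.gcsurj q.1 q.2 tT
  set q' : G × ↥(ball (T : Set H) n 1) := (q.1 * wordProd S w, k') with hq'
  have hstep : c.Step tT q q' := ⟨w, hwlen, rfl, heq⟩
  have hext1 : c.Ext [tT] q q' := ⟨q', hstep, rfl⟩
  have hext : c.Ext (c.wordT h ++ [tT]) (basePt T n) q' := c.ext_concat _ hq hext1
  have hFF' : c.FF (h * t) = c.vm q' := by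
    have h2 := c.FF_spec hext
    rwa [wordProd_append, c.wordT_spec, wordProd_cons, wordProd_nil, mul_one] at h2
  have hfk2 : c.f q.1 * (q.2 : H) * t = c.f q'.1 * (q'.2 : H) := (c.step_fk hstep).symm
  have hdist : (cayley (S : Set G)).dist q.1 q'.1 ≤ D := by
    refine le_trans (c.step_dist hstep) (le_trans ?_ c.hD)
    nlinarith [Nat.zero_le (2*KH*(n^2+n+n)), Nat.zero_le (n*(n^2+n+n))]
  rw [hFF, hFF']
  exact c.mergeT ht hfk2 hdist

lemma FF_lip : IsLip (T : Set H) (S : Set G) n c.FF := by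
  have aux : ∀ (z : List ↥T) (x : H),
      (cayley (S : Set G)).dist (c.FF x) (c.FF (x * wordProd T z)) ≤ n * z.length := by
    intro z
    induction z with
    | nil =>
      intro x
      simp [SimpleGraph.dist_self]
    | cons t z ih =>
      intro x
      have h1 := c.FF_lip_one x (t : H) t.2
      have h2 := ih (x * (t : H))
      calc (cayley (S : Set G)).dist (c.FF x) (c.FF (x * wordProd T (t :: z)))
          ≤ (cayley (S : Set G)).dist (c.FF x) (c.FF (x * (t:H))) +
            (cayley (S : Set G)).dist (c.FF (x * (t:H))) (c.FF (x * wordProd T (t :: z))) :=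
            c.hconnS.dist_triangle
        _ ≤ n + n * z.length := by
            refine add_le_add h1 ?_
            rw [wordProd_cons, ← mul_assoc]
            exact h2
        _ = n * (t :: z).length := by simp; ring
  intro x y
  obtain ⟨z, hzlen, hzprod⟩ := exists_word_of_dist c.hTsym c.hconnT x y
  have := aux z x
  rw [hzprod, hzlen] at this
  exact this

lemma f_lip : IsLip (S : Set G) (T : Set H) n c.f := by
  have aux : ∀ (z : List ↥S) (x : G),
      (cayley (T : Set H)).dist (c.f x) (c.f (x * wordProd S z)) ≤ n * z.length := by
    intro z
    induction z with
    | nil =>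
      intro x
      simp [SimpleGraph.dist_self]
    | cons s z ih =>
      intro x
      have h1 : (cayley (T : Set H)).dist (c.f x) (c.f (x * (s:G))) ≤ n := by
        rw [c.fd, dist_one_mul]
        exact mem_ball_dist ((c.σ x).1 s)
      have h2 := ih (x * (s : G))
      calc (cayley (T : Set H)).dist (c.f x) (c.f (x * wordProd S (s :: z)))
          ≤ (cayley (T : Set H)).dist (c.f x) (c.f (x * (s:G))) +
            (cayley (T : Set H)).dist (c.f (x * (s:G))) (c.f (x * wordProd S (s :: z))) :=
            c.hconnT.dist_triangle
        _ ≤ n + n * z.length := by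
            refine add_le_add h1 ?_
            rw [wordProd_cons, ← mul_assoc]
            exact h2
        _ = n * (s :: z).length := by simp; ring
  intro x y
  obtain ⟨z, hzlen, hzprod⟩ := exists_word_of_dist c.hSsym c.hconnS x y
  have := aux z x
  rw [hzprod, hzlen] at this
  exact this

end Ctx
section PartC

open Stmt17Aux

variable {G H : Type*} [Group G] [Group H] {S : Finset G} {T : Finset H} {n KG KH D : ℕ}

lemma dist_one_inv_mul (S' : Set G) (a b : G) :
    (cayley S').dist 1 (a⁻¹ * b) = (cayley S').dist a b := by
  have := dist_mul_mul S' a⁻¹ a b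
  simpa using this

lemma dist_inv_mul_left (S' : Set G) (a x y : G) :
    (cayley S').dist (a⁻¹ * x) y = (cayley S').dist x (a * y) := by
  have := dist_mul_mul S' a (a⁻¹ * x) y
  simpa [mul_assoc] using this.symm

lemma elemMove_wordProd {K : ℕ} {x x' : List ↥S} (h : ElemMove S K x x') :
    wordProd S x = wordProd S x' := by
  obtain ⟨u, v, v', z, hx, hx', _, _, hvv⟩ := h
  rw [hx, hx', wordProd_append, wordProd_append, wordProd_append, wordProd_append, hvv]

variable (σ : G → Alph S T n)

/-- global form: integrals over short relators vanish. -/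
def GC1 : Prop :=
  ∀ (g : G) (v v' : List ↥S), v.length ≤ KG → v'.length ≤ KG →
    wordProd S v = wordProd S v' → sint (sig1 σ) g v = sint (sig1 σ) g v'

lemma sint_word_indep (presS : PresentedBy S KG) (gc1 : GC1 (KG := KG) σ)
    {w w' : List ↥S} (h : wordProd S w = wordProd S w') :
    sint (sig1 σ) 1 w = sint (sig1 σ) 1 w' := by
  have hchain := presS w w' h
  clear h
  induction hchain with
  | refl => rfl
  | tail hch hmove ih =>
    rw [ih]
    obtain ⟨u, v, v', z, hx, hx', hvl, hvl', hvv⟩ := hmove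
    rw [hx, hx']
    rw [sint_append, sint_append, sint_append, sint_append]
    rw [gc1 (1 * wordProd S u) v v' hvl hvl' hvv]
    simp [wordProd_append, hvv]

variable {σ}

lemma mem_closure_of_gen {S : Finset G} (hSgen : Subgroup.closure (S : Set G) = ⊤) (g : G) :
    g ∈ Subgroup.closure (S : Set G) := by rw [hSgen]; trivial

noncomputable def frec (hSsym : ∀ s ∈ S, s⁻¹ ∈ S)
    (hSgen : Subgroup.closure (S : Set G) = ⊤) (g : G) : H :=
  sint (sig1 σ) 1 (Classical.choose (exists_word_of_mem_closure hSsym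
    (mem_closure_of_gen hSgen g)))

lemma frec_word (hSsym : ∀ s ∈ S, s⁻¹ ∈ S) (hSgen : Subgroup.closure (S : Set G) = ⊤)
    (presS : PresentedBy S KG) (gc1 : GC1 (KG := KG) σ) {g : G} {w : List ↥S}
    (hw : wordProd S w = g) : frec (σ := σ) hSsym hSgen g = sint (sig1 σ) 1 w := by
  refine sint_word_indep σ presS gc1 ?_
  rw [hw]
  exact Classical.choose_spec (exists_word_of_mem_closure hSsym (mem_closure_of_gen hSgen g))

lemma frec_one (hSsym : ∀ s ∈ S, s⁻¹ ∈ S) (hSgen : Subgroup.closure (S : Set G) = ⊤)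
    (presS : PresentedBy S KG) (gc1 : GC1 (KG := KG) σ) :
    frec (σ := σ) hSsym hSgen (1 : G) = 1 := by
  rw [frec_word hSsym hSgen presS gc1 (wordProd_nil S)]
  simp

lemma frec_w (hSsym : ∀ s ∈ S, s⁻¹ ∈ S) (hSgen : Subgroup.closure (S : Set G) = ⊤)
    (presS : PresentedBy S KG) (gc1 : GC1 (KG := KG) σ) (g : G) (w : List ↥S) :
    frec (σ := σ) hSsym hSgen (g * wordProd S w) =
      frec (σ := σ) hSsym hSgen g * sint (sig1 σ) g w := by
  obtain ⟨wg, hwg⟩ := exists_word_of_mem_closure hSsym (mem_closure_of_gen hSgen g)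
  have h1 : wordProd S (wg ++ w) = g * wordProd S w := by rw [wordProd_append, hwg]
  rw [frec_word hSsym hSgen presS gc1 h1, frec_word hSsym hSgen presS gc1 hwg,
    sint_append, hwg, one_mul]

section Extraction

variable (hLC : ∀ g : G, LC S T n KG D (fun x => σ (g * x)))
include hLC

lemma gc1_of_LC : GC1 (KG := KG) σ := by
  intro g v v' hv hv' hvv
  have h := (hLC g).1 v v' hv hv' hvv
  rwa [sint_sig1_translate, sint_sig1_translate, mul_one] at h

lemma gcfix_of_LC : ∀ g : G, (cayley (S : Set G)).dist g (vmap σ g (k1 T n)) ≤ n := by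
  intro g
  have h := (hLC g).2.1
  simp only [mul_one] at h
  rw [vmap, dist_one_mul]
  exact h

lemma gcqi_of_LC : ∀ (g : G) (k : ↥(ball (T : Set H) n 1)) (w : List ↥S),
    w.length ≤ n^2+n → g * wordProd S w = vmap σ g k →
    (cayley (T : Set H)).dist (sint (sig1 σ) g w) (k : H) ≤ n := by
  intro g k w hw hprod
  have hp2 : wordProd S w = (((fun x => σ (g * x)) 1).2 k : G) := by
    simp only [mul_one]
    rw [vmap] at hprod
    exact mul_left_cancel hprod
  have h := (hLC g).2.2.1 k w hw hp2
  rwa [sint_sig1_translate, mul_one] at h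

lemma gcsurj_of_LC : ∀ (g : G) (k : ↥(ball (T : Set H) n 1)) (t : ↥T),
    ∃ w : List ↥S, w.length ≤ n^2+n+n ∧ ∃ k' : ↥(ball (T : Set H) n 1),
      (k : H) * (t : H) = sint (sig1 σ) g w * (k' : H) := by
  intro g k t
  obtain ⟨w, hwlen, k', heq⟩ := (hLC g).2.2.2.1 k t
  rw [sint_sig1_translate, mul_one] at heq
  exact ⟨w, hwlen, k', heq⟩

lemma gccoh_of_LC : ∀ (g : G) (u : List ↥S), u.length ≤ D →
    ∀ (k k' : ↥(ball (T : Set H) n 1)) (t : H), (t ∈ (T : Set H) ∨ t = 1) →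
    (k : H) * t = sint (sig1 σ) g u * (k' : H) →
    (cayley (S : Set G)).dist (vmap σ g k) (vmap σ (g * wordProd S u) k') ≤ pen n t := by
  intro g u hu k k' t hmem heq
  have heq' : (k : H) * t = sint (sig1 (fun x => σ (g * x))) 1 u * (k' : H) := by
    rwa [sint_sig1_translate, mul_one]
  have h := (hLC g).2.2.2.2 u hu k k' t hmem heq'
  simp only [mul_one] at h
  rw [vmap, vmap, mul_assoc, dist_mul_mul]
  exact h

end Extraction

/-- The hard direction: local admissibility gives a genuine QI pair. -/
lemma reconstruction (hSsym : ∀ s ∈ S, s⁻¹ ∈ S) (hSgen : Subgroup.closure (S : Set G) = ⊤)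
    (hTsym : ∀ t ∈ T, t⁻¹ ∈ T) (hTgen : Subgroup.closure (T : Set H) = ⊤)
    (presS : PresentedBy S KG) (presT : PresentedBy T KH)
    (hD : 2*KH*(n^2+n+n) + n*(n^2+n+n) + 4*(n^2+n) + 2*n + 2 ≤ D)
    (hLC : ∀ g : G, LC S T n KG D (fun x => σ (g * x))) :
    ∃ (f : G → H) (F : H → G), IsQIPair (S : Set G) (T : Set H) n f F ∧
      (∀ (g : G) (s : ↥S), (((σ g).1 s : H)) = (f g)⁻¹ * f (g * ↑s)) ∧
      (∀ (g : G) (k : ↥(ball (T : Set H) n 1)),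
        (((σ g).2 k : G)) = g⁻¹ * F (f g * ↑k)) := by
  have gc1 := gc1_of_LC hLC
  set c : Ctx S T n KG KH D :=
    { σ := σ
      hSsym := hSsym
      hTsym := hTsym
      hconnS := cayley_connected hSsym hSgen
      hconnT := cayley_connected hTsym hTgen
      hSgen := hSgen
      hTgen := hTgen
      presT := presT
      hD := hD
      f := frec (σ := σ) hSsym hSgen
      f1 := frec_one hSsym hSgen presS gc1
      fw := frec_w hSsym hSgen presS gc1
      gcfix := gcfix_of_LC hLC
      gcqi := gcqi_of_LC hLC
      gcsurj := gcsurj_of_LC hLC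
      gccoh := gccoh_of_LC hLC } with hc
  refine ⟨c.f, c.FF, ⟨c.f_lip, c.FF_lip, c.FF_fix, c.FF_qinv⟩, ?_, ?_⟩
  · intro g s
    rw [c.fd g s]
    group
    rfl
  · intro g k
    rw [c.FF_vmap g k, vmap]
    group
    rfl

/-- The easy direction: a genuine QI pair satisfies the local conditions everywhere. -/
lemma validity (hSsym : ∀ s ∈ S, s⁻¹ ∈ S) (hSgen : Subgroup.closure (S : Set G) = ⊤)
    (hTsym : ∀ t ∈ T, t⁻¹ ∈ T) (hTgen : Subgroup.closure (T : Set H) = ⊤)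
    {f : G → H} {F : H → G} (hqi : IsQIPair (S : Set G) (T : Set H) n f F)
    (heq1 : ∀ (g : G) (s : ↥S), (((σ g).1 s : H)) = (f g)⁻¹ * f (g * ↑s))
    (heq2 : ∀ (g : G) (k : ↥(ball (T : Set H) n 1)),
      (((σ g).2 k : G)) = g⁻¹ * F (f g * ↑k)) :
    ∀ g : G, LC S T n KG D (fun x => σ (g * x)) := by
  obtain ⟨hlipf, hlipF, hfix, hqinv⟩ := hqi
  have hconnS := cayley_connected hSsym hSgen
  have hconnT := cayley_connected hTsym hTgen
  have hsint : ∀ (a : G) (w : List ↥S),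
      sint (sig1 σ) a w = (f a)⁻¹ * f (a * wordProd S w) :=
    fun a w => sint_eq_of_deriv (fun x s => heq1 x s) a w
  intro g
  have htr : ∀ (a : G) (w : List ↥S),
      sint (sig1 (fun x => σ (g * x))) a w = (f (g * a))⁻¹ * f (g * a * wordProd S w) := by
    intro a w
    rw [sint_sig1_translate, hsint]
  refine ⟨?_, ?_, ?_, ?_, ?_⟩
  · -- C1
    intro v v' hv hv' hvv
    rw [htr, htr, hvv]
  · -- Cfix
    simp only [mul_one]
    rw [heq2 g (k1 T n), k1_coe, mul_one, dist_one_inv_mul]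
    rw [SimpleGraph.dist_comm]
    exact hfix g
  · -- Cqi
    intro k w hw hprod
    simp only [mul_one] at hprod
    rw [heq2 g k] at hprod
    have hFh : g * wordProd S w = F (f g * (k : H)) := by
      rw [hprod, mul_inv_cancel_left]
    rw [htr, mul_one, hFh, dist_inv_mul_left]
    exact hqinv (f g * (k : H))
  · -- Csurj
    intro k t
    set h₁ : H := f g * (k : H) with hh₁
    set h₂ : H := h₁ * (t : H) with hh₂
    have hk' : (f (F h₂))⁻¹ * h₂ ∈ ball (T : Set H) n 1 := by
      have : (cayley (T : Set H)).dist 1 ((f (F h₂))⁻¹ * h₂) ≤ n := by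
        rw [dist_one_inv_mul]
        exact hqinv h₂
      exact this
    have hdist : (cayley (S : Set G)).dist g (F h₂) ≤ n^2+n+n := by
      have d1 : (cayley (S : Set G)).dist g (F (f g)) ≤ n := by
        rw [SimpleGraph.dist_comm]; exact hfix g
      have d2 : (cayley (S : Set G)).dist (F (f g)) (F h₁) ≤ n * n := by
        refine le_trans (hlipF (f g) h₁) (Nat.mul_le_mul_left n ?_)
        rw [hh₁, dist_one_mul]
        exact mem_ball_dist k
      have d3 : (cayley (S : Set G)).dist (F h₁) (F h₂) ≤ n * 1 := by
        refine le_trans (hlipF h₁ h₂) (Nat.mul_le_mul_left n ?_)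
        rw [hh₂, dist_one_mul]
        exact Ctx.dist_one_le_of_mem (by simpa using t.2)
      calc (cayley (S : Set G)).dist g (F h₂)
          ≤ (cayley (S : Set G)).dist g (F (f g)) +
            ((cayley (S : Set G)).dist (F (f g)) (F h₁) +
              (cayley (S : Set G)).dist (F h₁) (F h₂)) := by
            refine le_trans hconnS.dist_triangle (add_le_add_right hconnS.dist_triangle _)
        _ ≤ n + (n * n + n * 1) := by
            exact add_le_add d1 (add_le_add d2 d3)
        _ ≤ n^2+n+n := by nlinarith
    obtain ⟨w, hwlen, hwprod⟩ := exists_word_of_dist hSsym hconnS g (F h₂)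
    refine ⟨w, le_trans (le_of_eq hwlen) hdist, ⟨(f (F h₂))⁻¹ * h₂, hk'⟩, ?_⟩
    rw [htr, mul_one, ← mul_assoc, hwprod]
    rw [hh₂, hh₁]
    group
  · -- Ccoh
    intro u hu k k' t hmem heq
    rw [htr, mul_one] at heq
    simp only [mul_one]
    rw [heq2 g k, heq2 (g * wordProd S u) k']
    have hpt : wordProd S u * ((g * wordProd S u)⁻¹ * F (f (g * wordProd S u) * (k' : H))) =
        g⁻¹ * F (f (g * wordProd S u) * (k' : H)) := by group
    rw [hpt]
    rw [dist_inv_mul_left, mul_inv_cancel_left]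
    have hh2 : f (g * wordProd S u) * (k' : H) = f g * ((k : H) * t) := by
      rw [heq]
      group
    by_cases ht1 : t = 1
    · rw [ht1, pen_one, Nat.le_zero, hh2, ht1, mul_one]
      rw [SimpleGraph.Reachable.dist_eq_zero_iff (hconnS _ _)]
    · have htT : t ∈ (T : Set H) := hmem.resolve_right ht1
      rw [pen, if_neg ht1]
      rw [hh2, ← mul_assoc]
      refine le_trans (hlipF (f g * (k : H)) (f g * (k : H) * t)) ?_
      refine le_trans (Nat.mul_le_mul_left n ?_) (by omega : n * 1 ≤ n)
      rw [dist_one_mul]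
      exact Ctx.dist_one_le_of_mem htT

end PartC

end Part2


namespace Part2
section PartD

open Stmt17Aux

variable {G H : Type*} [Group G] [Group H] {S : Finset G} {T : Finset H} {n KG D : ℕ}

def Wset (S : Finset G) (L : ℕ) : Set G :=
  {x | ∃ w : List ↥S, w.length ≤ L ∧ wordProd S w = x}

lemma wset_finite (S : Finset G) (L : ℕ) : (Wset S L).Finite := by
  have he : Wset S L = (fun w : List ↥S => wordProd S w) '' {w | w.length ≤ L} := by
    ext x
    simp [Wset, Set.mem_image]
  rw [he]
  exact Set.Finite.image _ (List.finite_length_le ↥S L)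

lemma one_mem_wset {L : ℕ} : (1:G) ∈ Wset S L := ⟨[], Nat.zero_le _, rfl⟩

lemma prod_mem_wset {L : ℕ} {w : List ↥S} (hw : w.length ≤ L) :
    wordProd S w ∈ Wset S L := ⟨w, hw, rfl⟩

lemma sig1_congr_pt {τ τ' : G → Alph S T n} {x : G} (h : τ x = τ' x) :
    sig1 τ x = sig1 τ' x := by
  funext s
  simp [sig1, h]

lemma sint_congr_W {τ τ' : G → Alph S T n} (L : ℕ)
    (hag : ∀ x ∈ Wset S L, τ x = τ' x) {w : List ↥S} (hw : w.length ≤ L) :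
    sint (sig1 τ) 1 w = sint (sig1 τ') 1 w := by
  refine sint_congr w 1 (fun u hu => ?_)
  have hx : wordProd S u ∈ Wset S L := prod_mem_wset (le_trans hu hw)
  have hmem : (1:G) * wordProd S u ∈ Wset S L := by rw [one_mul]; exact hx
  exact sig1_congr_pt (hag _ hmem)

lemma LC_congr {L : ℕ} (hKG : KG ≤ L) (hm : n^2+n+n ≤ L) (hD : D ≤ L)
    {τ τ' : G → Alph S T n} (hag : ∀ x ∈ Wset S L, τ x = τ' x)
    (h : LC S T n KG D τ) : LC S T n KG D τ' := by
  obtain ⟨h1, h2, h3, h4, h5⟩ := h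
  have e1 : τ 1 = τ' 1 := hag 1 one_mem_wset
  refine ⟨?_, ?_, ?_, ?_, ?_⟩
  · intro v v' hv hv' hvv
    rw [← sint_congr_W L hag (hv.trans hKG), ← sint_congr_W L hag (hv'.trans hKG)]
    exact h1 v v' hv hv' hvv
  · rw [← e1]; exact h2
  · intro k w hw hp
    rw [← e1] at hp
    have := h3 k w hw hp
    rwa [sint_congr_W L hag (le_trans (le_trans hw (Nat.le_add_right _ n)) hm)] at this
  · intro k t
    obtain ⟨w, hwl, k', heq⟩ := h4 k t
    exact ⟨w, hwl, k', by rwa [sint_congr_W L hag (hwl.trans hm)] at heq⟩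
  · intro u hu k k' t hmem heq
    rw [← sint_congr_W L hag (hu.trans hD)] at heq
    have := h5 u hu k k' t hmem heq
    rwa [e1, hag (wordProd S u) (prod_mem_wset (hu.trans hD))] at this

end PartD
end Part2


/-- for finitely presented `G`, `H`, the set of pairs `(df, ℓ_{Ff})` over all
`n`-QI pairs `(f,F)`, viewed inside `𝒜^G` with
`𝒜 = B_H(n,1)^S × B_G(n²+n,1)^{B_H(n,1)}`, is a subshift of finite type. -/
theorem stmt17 {G H : Type*} [Group G] [Group H] (S : Finset G) (T : Finset H)
    (hSsym : ∀ s ∈ S, s⁻¹ ∈ S) (hSgen : Subgroup.closure (S : Set G) = ⊤)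
    (hTsym : ∀ t ∈ T, t⁻¹ ∈ T) (hTgen : Subgroup.closure (T : Set H) = ⊤)
    (hGfp : ∃ K : ℕ, PresentedBy S K)
    (hHfp : ∃ K : ℕ, PresentedBy T K) (n : ℕ) :
    IsSFT {σ : G → ((↥S → ↥(ball (T : Set H) n 1)) ×
        (↥(ball (T : Set H) n 1) → ↥(ball (S : Set G) (n ^ 2 + n) 1))) |
      ∃ (f : G → H) (F : H → G), IsQIPair (S : Set G) (T : Set H) n f F ∧
        (∀ (g : G) (s : ↥S), (((σ g).1 s : H)) = (f g)⁻¹ * f (g * ↑s)) ∧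
        (∀ (g : G) (k : ↥(ball (T : Set H) n 1)),
          (((σ g).2 k : G)) = g⁻¹ * F (f g * ↑k))} := by
  open Part2 Stmt17Aux in
    classical
    obtain ⟨KG, presS⟩ := hGfp
    obtain ⟨KH, presT⟩ := hHfp
    have hconnS := cayley_connected hSsym hSgen
    have hconnT := cayley_connected hTsym hTgen
    set D := 2*KH*(n^2+n+n) + n*(n^2+n+n) + 4*(n^2+n) + 2*n + 2 with hDdef
    set L := KG + (n^2+n+n) + D with hLdef
    have hKGL : KG ≤ L := le_trans (Nat.le_add_right _ _) (Nat.le_add_right _ _)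
    have hmL : n^2+n+n ≤ L := le_trans (Nat.le_add_left _ KG) (Nat.le_add_right _ _)
    have hDL : D ≤ L := Nat.le_add_left _ _
    haveI hfinT : Finite ↥(ball (T : Set H) n 1) := (ball_finite hTsym hconnT n).to_subtype
    haveI hfinS : Finite ↥(ball (S : Set G) (n^2+n) 1) :=
      (ball_finite hSsym hconnS (n^2+n)).to_subtype
    set Wfin : Finset G := (wset_finite S L).toFinset with hWfin
    have hWmem : ∀ x : G, x ∈ Wfin ↔ x ∈ Wset S L := fun x => Set.Finite.mem_toFinset _
    set dA : Alph S T n := ⟨fun _ => k1 T n, fun _ => ⟨1, one_mem_ball _ _⟩⟩ with hdA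
    set extend : (↥Wfin → Alph S T n) → (G → Alph S T n) :=
      fun p x => if h : x ∈ Wfin then p ⟨x, h⟩ else dA with hextend
    haveI hfinb : Finite {p : ↥Wfin → Alph S T n // ¬ LC S T n KG D (extend p)} :=
      Subtype.finite
    haveI : Fintype {p : ↥Wfin → Alph S T n // ¬ LC S T n KG D (extend p)} :=
      Fintype.ofFinite _
    set e := Fintype.equivFin {p : ↥Wfin → Alph S T n // ¬ LC S T n KG D (extend p)} with he
    refine ⟨Fin (Fintype.card {p : ↥Wfin → Alph S T n // ¬ LC S T n KG D (extend p)}),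
      inferInstance, fun _ => Wfin, fun i => (e.symm i).1, ?_⟩
    ext σ
    simp only [Set.mem_setOf_eq]
    constructor
    · rintro ⟨f, F, hqi, he1, he2⟩ g i
      have hLCg := validity hSsym hSgen hTsym hTgen hqi he1 he2 (KG := KG) (D := D) g
      by_contra hcon
      push_neg at hcon
      apply (e.symm i).2
      refine LC_congr hKGL hmL hDL (τ := fun x => σ (g * x)) ?_ hLCg
      intro x hx
      have hxW : x ∈ Wfin := (hWmem x).2 hx
      have := hcon ⟨x, hxW⟩
      simp only [hextend, dif_pos hxW]
      exact this
    · intro hall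
      refine reconstruction hSsym hSgen hTsym hTgen presS presT (le_refl D) ?_
      intro g
      by_contra hnot
      have hag : ∀ x ∈ Wset S L, extend (fun x : ↥Wfin => σ (g * (x:G))) x = σ (g * x) := by
        intro x hx
        have hxW : x ∈ Wfin := (hWmem x).2 hx
        simp only [hextend, dif_pos hxW]
      have hnot' : ¬ LC S T n KG D (extend (fun x : ↥Wfin => σ (g * (x:G)))) := by
        intro hLCe
        exact hnot (LC_congr hKGL hmL hDL hag hLCe)
      obtain ⟨x, hx⟩ := hall g (e ⟨fun x : ↥Wfin => σ (g * (x:G)), hnot'⟩)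
      rw [Equiv.symm_apply_apply] at hx
      exact hx rfl
end

section
/- Let G and H be groups with fixed finite symmetric generating sets, each equipped with its word metric, let (f,F) ∈ QIP_n(G,H), and let π ∈ G be such that the pair (df, ℓ_{Ff}) ∈ (B_H(n,1_H)^S × B_G(n²+n,1_G)^{B_H(n,1_H)})^G is π-periodic, i.e. (df, ℓ_{Ff})·π = (df, ℓ_{Ff}) under the shift action. Then for all g ∈ G, f(πg) = f(π)·f(1_G)⁻¹·f(g). -/
/-- if `(f,F)` is an `n`-QI pair and `(df, ℓ_{Ff})` is `π`-periodic for the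
shift action — i.e. `df(πg) = df(g)` and `ℓ_{Ff}(πg) = ℓ_{Ff}(g)` for all `g` — then
`f(πg) = f(π)·f(1)⁻¹·f(g)` for all `g ∈ G`. -/
theorem stmt18 {G H : Type*} [Group G] [Group H] (S : Finset G) (T : Finset H)
    (hSsym : ∀ s ∈ S, s⁻¹ ∈ S) (hSgen : Subgroup.closure (S : Set G) = ⊤)
    (hTsym : ∀ t ∈ T, t⁻¹ ∈ T) (hTgen : Subgroup.closure (T : Set H) = ⊤)
    (n : ℕ) (f : G → H) (F : H → G)
    (hqip : IsQIPair (S : Set G) (T : Set H) n f F) (π : G)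
    (hdf : ∀ (g : G) (s : ↥S),
      (f (π * g))⁻¹ * f (π * g * ↑s) = (f g)⁻¹ * f (g * ↑s))
    (hl : ∀ g : G, ∀ k ∈ ball (T : Set H) n 1,
      (π * g)⁻¹ * F (f (π * g) * k) = g⁻¹ * F (f g * k)) :
    ∀ g : G, f (π * g) = f π * (f 1)⁻¹ * f g := by
  have key : ∀ g : G, f (π * g) * (f g)⁻¹ = f π * (f 1)⁻¹ := by
    intro g
    have hg : g ∈ Submonoid.closure (S : Set G) := by
      have h1 : (S : Set G)⁻¹ ⊆ (S : Set G) := by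
        intro x hx
        have := hSsym x⁻¹ hx
        simpa using this
      have h2 : (Subgroup.closure (S : Set G)).toSubmonoid
          = Submonoid.closure ((S : Set G) ∪ (S : Set G)⁻¹) :=
        Subgroup.closure_toSubmonoid _
      have h3 : Submonoid.closure ((S : Set G) ∪ (S : Set G)⁻¹)
          = Submonoid.closure (S : Set G) := by
        apply le_antisymm
        · exact Submonoid.closure_le.2 (Set.union_subset Submonoid.subset_closure
            (h1.trans Submonoid.subset_closure))
        · exact Submonoid.closure_mono Set.subset_union_left
      have : g ∈ (Subgroup.closure (S : Set G)).toSubmonoid := by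
        rw [hSgen]; trivial
      rwa [h2, h3] at this
    induction hg using Submonoid.closure_induction_right with
    | one => simp
    | mul_right x hx s hs ih =>
      have hstep := hdf x ⟨s, hs⟩
      simp only at hstep
      have : f (π * (x * s)) = f (π * x) * ((f x)⁻¹ * f (x * s)) := by
        rw [← hstep, ← mul_assoc π x s]
        group
      rw [this, ← ih]
      group
  intro g
  have h := key g
  calc f (π * g) = f (π * g) * (f g)⁻¹ * f g := by group
    _ = f π * (f 1)⁻¹ * f g := by rw [h]
end

section
/- Let G and H be finitely presented groups with fixed finite symmetric generating sets S and T, let A be a finite set, let X_H ⊆ A^H be a subshift of finite type, let n ∈ ℕ, and let 𝒜 = B_H(n,1_H)^S × B_G(n²+n,1_G)^{B_H(n,1_H)} × A^{B_H(n,1_H)}. Then the set {(df, ℓ_{Ff}, f*(B_nσ)) : (f,F) ∈ QIP_n(G,H), σ ∈ X_H} ⊆ 𝒜^G is a subshift of finite type. -/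
namespace S19
open SimpleGraph
variable {G : Type*} [Group G]

lemma cayley_adj {S : Set G} {x y : G} :
    (cayley S).Adj x y ↔ x ≠ y ∧ (x⁻¹ * y ∈ S ∨ y⁻¹ * x ∈ S) := by
  simp [cayley, SimpleGraph.fromRel_adj]

/-- Left multiplication as a graph homomorphism of the Cayley graph. -/
def lmul (S : Set G) (a : G) : cayley S →g cayley S where
  toFun := fun x => a * x
  map_rel' := by
    intro x y h
    rw [cayley_adj] at h ⊢
    have h1 : (a * x)⁻¹ * (a * y) = x⁻¹ * y := by group
    have h2 : (a * y)⁻¹ * (a * x) = y⁻¹ * x := by group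
    rw [h1, h2]
    exact ⟨fun he => h.1 (mul_left_cancel he), h.2⟩

lemma reachable_lmul {S : Set G} (a : G) {x y : G} (h : (cayley S).Reachable x y) :
    (cayley S).Reachable (a * x) (a * y) := h.map (lmul S a)

lemma dist_lmul_le {S : Set G} (a x y : G) :
    (cayley S).dist (a * x) (a * y) ≤ (cayley S).dist x y := by
  by_cases hr : (cayley S).Reachable x y
  · obtain ⟨p, hp⟩ := hr.exists_walk_length_eq_dist
    calc (cayley S).dist (a * x) (a * y) ≤ (p.map (lmul S a)).length :=
          SimpleGraph.dist_le _
      _ = p.length := by simp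
      _ = _ := hp
  · have : ¬ (cayley S).Reachable (a * x) (a * y) := fun h => by
      have := reachable_lmul a⁻¹ h
      simp only [inv_mul_cancel_left] at this
      exact hr this
    rw [SimpleGraph.dist_eq_zero_of_not_reachable this]
    exact Nat.zero_le _

lemma dist_lmul {S : Set G} (a x y : G) :
    (cayley S).dist (a * x) (a * y) = (cayley S).dist x y := by
  refine le_antisymm (dist_lmul_le a x y) ?_
  have := dist_lmul_le (S := S) a⁻¹ (a * x) (a * y)
  simpa only [inv_mul_cancel_left] using this

lemma dist_conj {S : Set G} (x y : G) :
    (cayley S).dist x y = (cayley S).dist 1 (x⁻¹ * y) := by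
  have := dist_lmul (S := S) x⁻¹ x y
  simpa only [inv_mul_cancel] using this.symm

lemma dist_comm' {S : Set G} (x y : G) : (cayley S).dist x y = (cayley S).dist y x :=
  SimpleGraph.dist_comm

@[simp] lemma wordProd_nil {S : Finset G} : wordProd S ([] : List ↥S) = 1 := rfl

lemma wordProd_cons {S : Finset G} (s : ↥S) (w : List ↥S) :
    wordProd S (s :: w) = (s : G) * wordProd S w := by
  simp [wordProd]

lemma wordProd_singleton {S : Finset G} (s : ↥S) : wordProd S [s] = (s : G) := by
  rw [wordProd_cons, wordProd_nil, mul_one]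

lemma wordProd_append {S : Finset G} (w₁ w₂ : List ↥S) :
    wordProd S (w₁ ++ w₂) = wordProd S w₁ * wordProd S w₂ := by
  simp [wordProd]

/-- A word gives a walk of at most its length. -/
lemma walk_of_word {S : Finset G} (g : G) (w : List ↥S) :
    ∃ p : (cayley (S : Set G)).Walk g (g * wordProd S w), p.length ≤ w.length := by
  induction w generalizing g with
  | nil => exact ⟨(SimpleGraph.Walk.nil).copy rfl (by simp), by
      rw [SimpleGraph.Walk.length_copy, SimpleGraph.Walk.length_nil]; exact Nat.zero_le _⟩
  | cons s w ih =>
    obtain ⟨q, hq⟩ := ih (g * (s : G))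
    have hend : g * (s : G) * wordProd S w = g * wordProd S (s :: w) := by
      rw [wordProd_cons, mul_assoc]
    by_cases h1 : g = g * (s : G)
    · exact ⟨(q.copy h1.symm hend), by simpa using hq.trans (Nat.le_succ _)⟩
    · have hadj : (cayley (S : Set G)).Adj g (g * (s : G)) := by
        rw [cayley_adj]
        exact ⟨h1, Or.inl (by simpa using s.2)⟩
      exact ⟨(SimpleGraph.Walk.cons hadj q).copy rfl hend, by simpa using hq⟩

lemma word_of_walk {S : Finset G} (hSsym : ∀ s ∈ S, s⁻¹ ∈ S) {x y : G}
    (p : (cayley (S : Set G)).Walk x y) :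
    ∃ w : List ↥S, w.length ≤ p.length ∧ wordProd S w = x⁻¹ * y := by
  induction p with
  | nil => exact ⟨[], by simp⟩
  | @cons x z y hadj q ih =>
    obtain ⟨w, hw1, hw2⟩ := ih
    rw [cayley_adj] at hadj
    have hmem : x⁻¹ * z ∈ S := by
      rcases hadj.2 with h | h
      · exact h
      · have := hSsym _ h; simpa using this
    refine ⟨⟨x⁻¹ * z, hmem⟩ :: w, by simpa using hw1, ?_⟩
    rw [wordProd_cons, hw2]
    group

lemma reachable_one {S : Finset G} (hSsym : ∀ s ∈ S, s⁻¹ ∈ S)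
    (hSgen : Subgroup.closure (S : Set G) = ⊤) (g : G) :
    (cayley (S : Set G)).Reachable 1 g := by
  have hg : g ∈ Subgroup.closure (S : Set G) := hSgen ▸ Subgroup.mem_top g
  induction hg using Subgroup.closure_induction with
  | mem s hs =>
    by_cases h1 : (1 : G) = s
    · rw [← h1]
    · refine SimpleGraph.Adj.reachable ?_
      rw [cayley_adj]
      exact ⟨h1, Or.inl (by simpa using hs)⟩
  | one => rfl
  | mul a b _ _ ha hb =>
    refine ha.trans ?_
    have := reachable_lmul (S := (S : Set G)) a hb
    simpa using this
  | inv a _ ha =>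
    have := reachable_lmul (S := (S : Set G)) a⁻¹ ha
    simp only [mul_one, inv_mul_cancel] at this
    exact this.symm

section Gen
variable {S : Finset G} (hSsym : ∀ s ∈ S, s⁻¹ ∈ S)
  (hSgen : Subgroup.closure (S : Set G) = ⊤)
include hSsym hSgen

lemma dist_one_le_iff {g : G} {m : ℕ} :
    (cayley (S : Set G)).dist 1 g ≤ m ↔
      ∃ w : List ↥S, w.length ≤ m ∧ wordProd S w = g := by
  constructor
  · intro h
    obtain ⟨p, hp⟩ := (reachable_one hSsym hSgen g).exists_walk_length_eq_dist
    obtain ⟨w, hw1, hw2⟩ := word_of_walk hSsym p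
    exact ⟨w, le_trans hw1 (hp ▸ h), by simpa using hw2⟩
  · rintro ⟨w, hw1, rfl⟩
    obtain ⟨p, hp⟩ := walk_of_word (S := S) 1 w
    have := SimpleGraph.dist_le (p.copy rfl (one_mul _))
    rw [SimpleGraph.Walk.length_copy] at this
    exact le_trans (this.trans hp) hw1

lemma dist_word_le (w : List ↥S) :
    (cayley (S : Set G)).dist 1 (wordProd S w) ≤ w.length :=
  (dist_one_le_iff hSsym hSgen).mpr ⟨w, le_rfl, rfl⟩

lemma dist_one_mul_le (a b : G) :
    (cayley (S : Set G)).dist 1 (a * b) ≤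
      (cayley (S : Set G)).dist 1 a + (cayley (S : Set G)).dist 1 b := by
  obtain ⟨wa, ha1, ha2⟩ := (dist_one_le_iff hSsym hSgen (g := a)).mp le_rfl
  obtain ⟨wb, hb1, hb2⟩ := (dist_one_le_iff hSsym hSgen (g := b)).mp le_rfl
  refine (dist_one_le_iff hSsym hSgen).mpr ⟨wa ++ wb, ?_, ?_⟩
  · simpa using Nat.add_le_add ha1 hb1
  · rw [wordProd_append, ha2, hb2]

lemma dist_triangle' (x y z : G) :
    (cayley (S : Set G)).dist x z ≤
      (cayley (S : Set G)).dist x y + (cayley (S : Set G)).dist y z := by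
  rw [dist_conj x z, dist_conj x y, dist_conj y z]
  have : x⁻¹ * z = (x⁻¹ * y) * (y⁻¹ * z) := by group
  rw [this]
  exact dist_one_mul_le hSsym hSgen _ _

/-- A geodesic word for `g`. -/
noncomputable def geo (g : G) : List ↥S :=
  Classical.choose ((dist_one_le_iff hSsym hSgen (g := g)
    (m := (cayley (S : Set G)).dist 1 g)).mp le_rfl)

lemma geo_spec (g : G) :
    (geo hSsym hSgen g).length ≤ (cayley (S : Set G)).dist 1 g ∧
      wordProd S (geo hSsym hSgen g) = g :=
  Classical.choose_spec ((dist_one_le_iff hSsym hSgen (g := g)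
    (m := (cayley (S : Set G)).dist 1 g)).mp le_rfl)

lemma ball_finite (m : ℕ) : (ball (S : Set G) m (1 : G)).Finite := by
  have hs : ball (S : Set G) m (1 : G) ⊆
      (fun w : List ↥S => wordProd S w) '' {w | w.length ≤ m} := by
    intro x hx
    obtain ⟨w, hw1, hw2⟩ := (dist_one_le_iff hSsym hSgen).mp hx
    exact ⟨w, hw1, hw2⟩
  exact ((List.finite_length_le _ m).image _).subset hs

end Gen

lemma mem_ball_one {S : Set G} {m : ℕ} {x : G} :
    x ∈ ball S m (1 : G) ↔ (cayley S).dist 1 x ≤ m := Iff.rfl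

lemma mem_S_dist_le {S : Finset G} {s : G} (hs : s ∈ S) :
    (cayley (S : Set G)).dist 1 s ≤ 1 := by
  obtain ⟨p, hp⟩ := walk_of_word (S := S) 1 [⟨s, hs⟩]
  have h2 : (1 : G) * wordProd S [⟨s, hs⟩] = s := by simp [wordProd]
  have := SimpleGraph.dist_le (p.copy rfl h2)
  rw [SimpleGraph.Walk.length_copy] at this
  exact this.trans (by simpa using hp)

end S19
namespace S19
variable {G H A : Type*} [Group G] [Group H]

lemma sint_append {S : Finset G} (δ : G → ↥S → H) (g : G) (w₁ w₂ : List ↥S) :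
    sint δ g (w₁ ++ w₂) = sint δ g w₁ * sint δ (g * wordProd S w₁) w₂ := by
  induction w₁ generalizing g with
  | nil => simp [sint]
  | cons s w ih =>
    simp only [List.cons_append, sint]
    rw [ih (g * (s : G)), wordProd_cons, mul_assoc,
      mul_assoc]

/-- If `δ` is the derivative of `φ` along all prefixes of `w`, then the integral of `δ`
along `w` telescopes. -/
lemma sint_eq_of_df {S : Finset G} (δ : G → ↥S → H) (φ : G → H) (g : G) (w : List ↥S)
    (hw : ∀ (u : List ↥S) (s : ↥S), (u ++ [s]) <+: w →
      δ (g * wordProd S u) s = (φ (g * wordProd S u))⁻¹ * φ (g * wordProd S u * (s : G))) :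
    sint δ g w = (φ g)⁻¹ * φ (g * wordProd S w) := by
  induction w generalizing g with
  | nil => simp [sint]
  | cons s w ih =>
    have h0 := hw [] s (by simp)
    simp only [wordProd_nil, mul_one] at h0
    have ih' := ih (g * (s : G)) (fun u t hut => by
      have := hw (s :: u) t (List.cons_prefix_cons.mpr ⟨rfl, hut⟩)
      simpa [wordProd_cons, mul_assoc] using this)
    simp only [sint, h0, ih', wordProd_cons, ← mul_assoc]
    group

lemma dist_one_sint_le {S : Finset G} {T : Finset H}
    (hTsym : ∀ t ∈ T, t⁻¹ ∈ T) (hTgen : Subgroup.closure (T : Set H) = ⊤)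
    {n : ℕ} (δ : G → ↥S → H) (hδ : ∀ x s, (cayley (T : Set H)).dist 1 (δ x s) ≤ n) :
    ∀ (w : List ↥S) (g : G), (cayley (T : Set H)).dist 1 (sint δ g w) ≤ n * w.length := by
  intro w
  induction w with
  | nil => intro g; simp [sint]
  | cons s w ih =>
    intro g
    calc (cayley (T : Set H)).dist 1 (δ g s * sint δ (g * (s : G)) w)
        ≤ (cayley (T : Set H)).dist 1 (δ g s)
          + (cayley (T : Set H)).dist 1 (sint δ (g * (s : G)) w) :=
          dist_one_mul_le hTsym hTgen _ _
      _ ≤ n + n * w.length := Nat.add_le_add (hδ g s) (ih _)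
      _ = n * (s :: w).length := by simp [List.length_cons, Nat.mul_succ, Nat.add_comm]

/-- A set defined by a condition on a finite window is an SFT. -/
lemma isSFT_window {A' : Type*} [Finite A'] (W : Finset G) (Φ : (↥W → A') → Prop) :
    IsSFT {τ : G → A' | ∀ g : G, Φ (fun x => τ (g * ↑x))} := by
  classical
  obtain ⟨m, ⟨e⟩⟩ := Finite.exists_equiv_fin {q : ↥W → A' // ¬ Φ q}
  refine ⟨Fin m, inferInstance, fun _ => W, fun i => (e.symm i).1, ?_⟩
  ext τ
  simp only [Set.mem_setOf_eq]
  constructor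
  · intro h g i
    by_contra hc
    push_neg at hc
    have : (fun x : ↥W => τ (g * ↑x)) = (e.symm i).1 := funext hc
    exact (e.symm i).2 (this ▸ h g)
  · intro h g
    by_contra hΦ
    obtain ⟨x, hx⟩ := h g (e ⟨_, hΦ⟩)
    rw [Equiv.symm_apply_apply] at hx
    exact hx rfl

variable (S : Finset G) (T : Finset H) (n : ℕ)

/-- The alphabet. -/
abbrev Alp (A : Type*) := (↥S → ↥(ball (T : Set H) n 1)) ×
    (↥(ball (T : Set H) n 1) → ↥(ball (S : Set G) (n ^ 2 + n) 1)) ×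
    (↥(ball (T : Set H) n 1) → A)

/-- Membership in the target set. -/
def Good (X_H : Set (H → A)) (τ : G → Alp S T n A) : Prop :=
  ∃ (f : G → H) (F : H → G) (σ : H → A),
    IsQIPair (S : Set G) (T : Set H) n f F ∧ σ ∈ X_H ∧
    (∀ (g : G) (s : ↥S), (((τ g).1 s : H)) = (f g)⁻¹ * f (g * ↑s)) ∧
    (∀ (g : G) (k : ↥(ball (T : Set H) n 1)),
      (((τ g).2.1 k : G)) = g⁻¹ * F (f g * ↑k)) ∧
    (∀ (g : G) (k : ↥(ball (T : Set H) n 1)),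
      (τ g).2.2 k = σ (f g * ↑k))

variable {S T n}

lemma Good.translate {A : Type*} {X_H : Set (H → A)} {τ : G → Alp S T n A}
    (hτ : Good S T n X_H τ) (g : G) : Good S T n X_H (fun x => τ (g * x)) := by
  obtain ⟨f, F, σ, ⟨hf, hF, h1, h2⟩, hσ, e1, e2, e3⟩ := hτ
  refine ⟨fun x => f (g * x), fun h => g⁻¹ * F h, σ, ⟨?_, ?_, ?_, ?_⟩, hσ, ?_, ?_, ?_⟩
  · intro x y
    have := hf (g * x) (g * y)
    rwa [dist_lmul] at this
  · intro x y
    calc (cayley (S : Set G)).dist (g⁻¹ * F x) (g⁻¹ * F y)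
        = (cayley (S : Set G)).dist (F x) (F y) := dist_lmul _ _ _
      _ ≤ n * (cayley (T : Set H)).dist x y := hF x y
  · intro x
    calc (cayley (S : Set G)).dist (g⁻¹ * F (f (g * x))) x
        = (cayley (S : Set G)).dist (F (f (g * x))) (g * x) := by
          rw [← dist_lmul (S := (S : Set G)) g⁻¹ (F (f (g * x))) (g * x), inv_mul_cancel_left]
      _ ≤ n := h1 (g * x)
  · intro h
    simpa [mul_inv_cancel_left] using h2 h
  · intro x s
    rw [e1 (g * x) s, mul_assoc]
  · intro x k
    rw [e2 (g * x) k]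
    simp [mul_inv_rev, mul_assoc]
  · intro x k
    exact e3 (g * x) k

end S19
namespace S19

/-- All the data available in the reconstruction step. -/
structure Ctx (G H A : Type*) [Group G] [Group H] where
  S : Finset G
  T : Finset H
  n : ℕ
  K_G : ℕ
  K_H : ℕ
  R : ℕ
  X_H : Set (H → A)
  τ : G → Alp S T n A
  hSsym : ∀ s ∈ S, s⁻¹ ∈ S
  hSgen : Subgroup.closure (S : Set G) = ⊤
  hTsym : ∀ t ∈ T, t⁻¹ ∈ T
  hTgen : Subgroup.closure (T : Set H) = ⊤
  hpresG : PresentedBy S K_G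
  hpresT : PresentedBy T K_H
  fg : G → G → H
  Fg : G → H → G
  σg : G → H → A
  hQI : ∀ g, IsQIPair (S : Set G) (T : Set H) n (fg g) (Fg g)
  hf1 : ∀ g, fg g 1 = 1
  hσX : ∀ g, σg g ∈ X_H
  hw1 : ∀ g x, (cayley (S : Set G)).dist 1 x ≤ R → ∀ s : ↥S,
    ((τ (g * x)).1 s : H) = (fg g x)⁻¹ * fg g (x * ↑s)
  hw2 : ∀ g x, (cayley (S : Set G)).dist 1 x ≤ R → ∀ k : ↥(ball (T : Set H) n 1),
    ((τ (g * x)).2.1 k : G) = x⁻¹ * Fg g (fg g x * ↑k)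
  hw3 : ∀ g x, (cayley (S : Set G)).dist 1 x ≤ R → ∀ k : ↥(ball (T : Set H) n 1),
    (τ (g * x)).2.2 k = σg g (fg g x * ↑k)
  hRKG : K_G ≤ R
  hRD : 2 * (n ^ 2 + n) + 2 * (n ^ 2 + 2 * n) * (K_H + 1) + 1 ≤ R

namespace Ctx
variable {G H A : Type*} [Group G] [Group H] {C : Ctx G H A}

/-- The subtype of the `n`-ball in `H`. -/
abbrev B (C : Ctx G H A) := ↥(ball (C.T : Set H) C.n (1 : H))

def s0 (C : Ctx G H A) : ℕ := C.n ^ 2 + 2 * C.n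
def D2 (C : Ctx G H A) : ℕ := 2 * (C.n ^ 2 + C.n)
def D (C : Ctx G H A) : ℕ := C.D2 + 2 * C.s0 * (C.K_H + 1) + 1

lemma D_le_R : C.D ≤ C.R := C.hRD
lemma s0_le_D : C.s0 ≤ C.D := by
  have : C.s0 ≤ 2 * C.s0 * (C.K_H + 1) := by nlinarith [Nat.zero_le C.s0, Nat.zero_le C.K_H]
  unfold D
  omega
lemma one_le_D : 1 ≤ C.D := by unfold D; omega
lemma par_arith : C.s0 + C.D2 + C.s0 ≤ C.D := by
  have : 2 * C.s0 ≤ 2 * C.s0 * (C.K_H + 1) := by nlinarith [Nat.zero_le C.s0, Nat.zero_le C.K_H]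
  unfold D; omega
lemma stat_arith : C.s0 + C.D2 ≤ C.D := by
  have := par_arith (C := C); omega
lemma elem_arith {x y : ℕ} (hx : x ≤ C.K_H) (hy : y ≤ C.K_H) :
    C.s0 * x + C.D2 + C.s0 * y ≤ C.D := by
  have h1 : C.s0 * x ≤ C.s0 * C.K_H := Nat.mul_le_mul_left _ hx
  have h2 : C.s0 * y ≤ C.s0 * C.K_H := Nat.mul_le_mul_left _ hy
  have h3 : 2 * (C.s0 * C.K_H) ≤ 2 * C.s0 * (C.K_H + 1) := by nlinarith [Nat.zero_le C.s0]
  unfold D; omega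
lemma s0_le_R : C.s0 ≤ C.R := le_trans s0_le_D D_le_R
lemma D2_le_D : C.D2 ≤ C.D := by unfold D; omega

def delta (C : Ctx G H A) (g : G) (s : ↥C.S) : H := ((C.τ g).1 s : H)
def lam (C : Ctx G H A) (g : G) (k : C.B) : G := ((C.τ g).2.1 k : G)
def vv (C : Ctx G H A) (g : G) (k : C.B) : G := g * C.lam g k
def sv (C : Ctx G H A) (g : G) (k : C.B) : A := (C.τ g).2.2 k

lemma dist_delta (g : G) (s : ↥C.S) :
    (cayley (C.T : Set H)).dist 1 (C.delta g s) ≤ C.n := ((C.τ g).1 s).2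
lemma dist_lam (g : G) (k : C.B) :
    (cayley (C.S : Set G)).dist 1 (C.lam g k) ≤ C.n ^ 2 + C.n := ((C.τ g).2.1 k).2
lemma dist_B (k : C.B) : (cayley (C.T : Set H)).dist 1 (k : H) ≤ C.n := k.2

lemma dist_mul_right (x : G) {S : Set G} (g : G) :
    (cayley S).dist g (g * x) = (cayley S).dist 1 x := by
  rw [dist_conj]; simp

lemma dist_vv (g : G) (k : C.B) :
    (cayley (C.S : Set G)).dist g (C.vv g k) ≤ C.n ^ 2 + C.n := by
  rw [vv, dist_mul_right]; exact dist_lam g k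

/-- The reconstructed map `f`. -/
noncomputable def ff (C : Ctx G H A) (g : G) : H :=
  sint C.delta 1 (geo C.hSsym C.hSgen g)

/-- In the window around `g`, the integral of `δ` telescopes through the local model. -/
lemma sint_window (g : G) (w : List ↥C.S)
    (hlen : ∀ u : List ↥C.S, u <+: w →
      (cayley (C.S : Set G)).dist 1 (wordProd C.S u) ≤ C.R) :
    sint C.delta g w = C.fg g (wordProd C.S w) := by
  have h := sint_eq_of_df C.delta (fun p => C.fg g (g⁻¹ * p)) g w ?_
  · rw [h]
    have e1 : g⁻¹ * g = 1 := inv_mul_cancel g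
    have e2 : g⁻¹ * (g * wordProd C.S w) = wordProd C.S w := by group
    rw [e1, e2, C.hf1 g]
    simp
  · intro u s hus
    have hu : (cayley (C.S : Set G)).dist 1 (wordProd C.S u) ≤ C.R :=
      hlen u (((List.prefix_append u [s])).trans hus)
    have hthis := C.hw1 g (wordProd C.S u) hu s
    have e1 : g⁻¹ * (g * wordProd C.S u) = wordProd C.S u := by group
    have e2 : g⁻¹ * (g * wordProd C.S u * (s : G)) = wordProd C.S u * (s : G) := by group
    simp only [delta, hthis, e1, e2]

lemma sint_elem {w w' : List ↥C.S} (h : ElemMove C.S C.K_G w w') :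
    sint C.delta 1 w = sint C.delta 1 w' := by
  obtain ⟨u, v, v', x, rfl, rfl, hv, hv', hvv⟩ := h
  rw [sint_append, sint_append, sint_append, sint_append, wordProd_append, wordProd_append,
    hvv]
  congr 1
  congr 1
  set p := (1 : G) * wordProd C.S u with hp
  have key : ∀ (z : List ↥C.S), z.length ≤ C.K_G →
      sint C.delta p z = C.fg p (wordProd C.S z) := by
    intro z hz
    refine sint_window p z (fun u' hu' => ?_)
    calc (cayley (C.S : Set G)).dist 1 (wordProd C.S u')
        ≤ u'.length := dist_word_le C.hSsym C.hSgen u'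
      _ ≤ z.length := hu'.length_le
      _ ≤ C.K_G := hz
      _ ≤ C.R := C.hRKG
  rw [key v hv, key v' hv', hvv]

lemma elem_prod {S' : Finset G} {K : ℕ} {w w' : List ↥S'} (h : ElemMove S' K w w') :
    wordProd S' w = wordProd S' w' := by
  obtain ⟨u, v, v', x, rfl, rfl, _, _, hvv⟩ := h
  simp only [wordProd_append, hvv]

lemma sint_welldef {w w' : List ↥C.S} (h : wordProd C.S w = wordProd C.S w') :
    sint C.delta 1 w = sint C.delta 1 w' := by
  have hc := C.hpresG w w' h
  clear h
  induction hc with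
  | refl => rfl
  | tail _ hstep ih => rw [ih, sint_elem hstep]

lemma ff_eq {g : G} (w : List ↥C.S) (h : wordProd C.S w = g) :
    sint C.delta 1 w = C.ff g := by
  exact sint_welldef (by rw [h, (geo_spec C.hSsym C.hSgen g).2])

lemma ff_one : C.ff 1 = 1 := (ff_eq ([] : List ↥C.S) rfl).symm

lemma ff_mul_word (g : G) (w : List ↥C.S) :
    C.ff (g * wordProd C.S w) = C.ff g * sint C.delta g w := by
  have h1 : wordProd C.S (geo C.hSsym C.hSgen g ++ w) = g * wordProd C.S w := by
    rw [wordProd_append, (geo_spec C.hSsym C.hSgen g).2]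
  rw [← ff_eq _ h1, sint_append, (geo_spec C.hSsym C.hSgen g).2,
    ff_eq _ (geo_spec C.hSsym C.hSgen g).2, one_mul]

lemma ff_step (g : G) (s : ↥C.S) : C.ff (g * (s : G)) = C.ff g * C.delta g s := by
  have h := ff_mul_word (C := C) g [s]
  have e : wordProd C.S [s] = (s : G) := by simp [wordProd]
  rw [e] at h
  rw [h]
  simp [sint]

/-- The window identity: `f` agrees with the local model near `g`. -/
lemma window {g x : G} (hx : (cayley (C.S : Set G)).dist 1 x ≤ C.R) :
    C.ff (g * x) = C.ff g * C.fg g x := by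
  obtain ⟨hlen, hprod⟩ := geo_spec C.hSsym C.hSgen x
  rw [← hprod, ff_mul_word, sint_window g _ (fun u hu => ?_), hprod]
  calc (cayley (C.S : Set G)).dist 1 (wordProd C.S u)
      ≤ u.length := dist_word_le C.hSsym C.hSgen u
    _ ≤ (geo C.hSsym C.hSgen x).length := hu.length_le
    _ ≤ (cayley (C.S : Set G)).dist 1 x := hlen
    _ ≤ C.R := hx

lemma ff_lip : IsLip (C.S : Set G) (C.T : Set H) C.n C.ff := by
  intro x y
  obtain ⟨hlen, hprod⟩ := geo_spec C.hSsym C.hSgen (x⁻¹ * y)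
  have hy : x * wordProd C.S (geo C.hSsym C.hSgen (x⁻¹ * y)) = y := by
    rw [hprod]; group
  have hfy : C.ff y = C.ff x * sint C.delta x (geo C.hSsym C.hSgen (x⁻¹ * y)) := by
    have h0 := ff_mul_word (C := C) x (geo C.hSsym C.hSgen (x⁻¹ * y))
    rw [hy] at h0
    exact h0
  rw [dist_conj (C.ff x) (C.ff y), hfy]
  have e : (C.ff x)⁻¹ * (C.ff x * sint C.delta x (geo C.hSsym C.hSgen (x⁻¹ * y))) =
      sint C.delta x (geo C.hSsym C.hSgen (x⁻¹ * y)) := by group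
  rw [e]
  calc (cayley (C.T : Set H)).dist 1 (sint C.delta x (geo C.hSsym C.hSgen (x⁻¹ * y)))
      ≤ C.n * (geo C.hSsym C.hSgen (x⁻¹ * y)).length :=
        dist_one_sint_le C.hTsym C.hTgen C.delta (fun p s => dist_delta p s) _ x
    _ ≤ C.n * (cayley (C.S : Set G)).dist 1 (x⁻¹ * y) := Nat.mul_le_mul_left _ hlen
    _ = C.n * (cayley (C.S : Set G)).dist x y := by
        congr 1
        exact (dist_conj x y).symm

/-- local coherence of the reconstructed data. -/
lemma c_loc {g g' : G} {k k' : C.B} (hh : C.ff g * (k : H) = C.ff g' * (k' : H))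
    (hd : (cayley (C.S : Set G)).dist g g' ≤ C.D) :
    C.vv g k = C.vv g' k' ∧ C.sv g k = C.sv g' k' := by
  set x := g⁻¹ * g' with hx
  have hg' : g' = g * x := by rw [hx]; group
  have hdx : (cayley (C.S : Set G)).dist 1 x ≤ C.R := by
    rw [hx, ← dist_conj]
    exact le_trans hd D_le_R
  have hwin : C.ff (g * x) = C.ff g * C.fg g x := window hdx
  have hkey : C.fg g x * (k' : H) = (k : H) := by
    have : C.ff g * (C.fg g x * (k' : H)) = C.ff g * (k : H) := by
      rw [← mul_assoc, ← hwin, ← hg', hh]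
    exact mul_left_cancel this
  have hone : (cayley (C.S : Set G)).dist 1 (1 : G) ≤ C.R := by
    simp [SimpleGraph.dist_self]
  have h2 := C.hw2 g x hdx k'
  have h2' := C.hw2 g 1 hone k
  have h3 := C.hw3 g x hdx k'
  have h3' := C.hw3 g 1 hone k
  rw [mul_one] at h2' h3'
  rw [C.hf1 g, one_mul] at h2' h3'
  constructor
  · rw [vv, vv, lam, lam, hg', h2, h2', hkey]
    group
  · rw [sv, sv, hg', h3, h3', hkey]

end Ctx
end S19
namespace S19
namespace Ctx
variable {G H A : Type*} [Group G] [Group H] {C : Ctx G H A}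

def oneB (C : Ctx G H A) : C.B :=
  ⟨1, by simp [mem_ball_one, SimpleGraph.dist_self]⟩

@[simp] lemma oneB_coe : ((C.oneB : H)) = 1 := rfl

lemma dist_one_of_adj {a b : H} (hadj : (cayley (C.T : Set H)).Adj a b) :
    (cayley (C.T : Set H)).dist 1 (a⁻¹ * b) ≤ 1 := by
  rw [cayley_adj] at hadj
  rcases hadj.2 with h | h
  · exact mem_S_dist_le h
  · have : (a⁻¹ * b : H) ∈ C.T := by
      have := C.hTsym _ h
      simpa using this
    exact mem_S_dist_le this

/-- Density step: transport a representative one generator forward. -/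
lemma step (g : G) (k : C.B) (t : H) (ht : (cayley (C.T : Set H)).dist 1 t ≤ 1) :
    ∃ (c : G) (κ : C.B), C.ff c * (κ : H) = C.ff g * (k : H) * t ∧
      (cayley (C.S : Set G)).dist g c ≤ C.s0 ∧ C.vv c κ = g * C.Fg g ((k : H) * t) := by
  obtain ⟨hfLip, hFLip, hq3, hq4⟩ := C.hQI g
  have hkt : (cayley (C.T : Set H)).dist 1 ((k : H) * t) ≤ C.n + 1 :=
    le_trans (dist_one_mul_le C.hTsym C.hTgen _ _) (Nat.add_le_add (dist_B k) ht)
  set u := C.Fg g ((k : H) * t) with hu_def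
  have hu1 : (cayley (C.S : Set G)).dist 1 (C.Fg g 1) ≤ C.n := by
    have := hq3 1
    rw [C.hf1 g] at this
    rwa [dist_comm' (C.Fg g 1) 1] at this
  have hu2 : (cayley (C.S : Set G)).dist (C.Fg g 1) u ≤ C.n * (C.n + 1) :=
    le_trans (hFLip 1 _) (Nat.mul_le_mul_left _ hkt)
  have hu : (cayley (C.S : Set G)).dist 1 u ≤ C.s0 := by
    have h3 := dist_triangle' C.hSsym C.hSgen 1 (C.Fg g 1) u
    have : C.n + C.n * (C.n + 1) = C.s0 := by unfold s0; ring
    omega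
  have huR : (cayley (C.S : Set G)).dist 1 u ≤ C.R := le_trans hu s0_le_R
  have hwin : C.ff (g * u) = C.ff g * C.fg g u := window huR
  set κ0 := (C.fg g u)⁻¹ * ((k : H) * t) with hκ0
  have hκ : (cayley (C.T : Set H)).dist 1 κ0 ≤ C.n := by
    rw [hκ0, ← dist_conj]
    exact hq4 _
  refine ⟨g * u, ⟨κ0, mem_ball_one.mpr hκ⟩, ?_, ?_, ?_⟩
  · show C.ff (g * u) * κ0 = C.ff g * (k : H) * t
    rw [hwin, hκ0]
    group
  · rw [dist_mul_right]; exact hu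
  · have h2 := C.hw2 g u huR ⟨κ0, mem_ball_one.mpr hκ⟩
    show g * u * ((C.τ (g * u)).2.1 ⟨κ0, mem_ball_one.mpr hκ⟩ : G) = g * C.Fg g ((k : H) * t)
    rw [h2]
    have e : C.fg g u * ((⟨κ0, mem_ball_one.mpr hκ⟩ : C.B) : H) = (k : H) * t := by
      show C.fg g u * κ0 = (k : H) * t
      rw [hκ0]; group
    rw [e]
    group

def eqR (C : Ctx G H A) (g : G) (k : C.B) (g' : G) (k' : C.B) : Prop :=
  C.vv g k = C.vv g' k' ∧ C.sv g k = C.sv g' k'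

lemma eqR_refl (g : G) (k : C.B) : C.eqR g k g k := ⟨rfl, rfl⟩
lemma eqR_symm {g : G} {k : C.B} {g' : G} {k' : C.B} (h : C.eqR g k g' k') : C.eqR g' k' g k := ⟨h.1.symm, h.2.symm⟩
lemma eqR_trans {g₁ : G} {k₁ : C.B} {g₂ : G} {k₂ : C.B} {g₃ : G} {k₃ : C.B} (h : C.eqR g₁ k₁ g₂ k₂) (h' : C.eqR g₂ k₂ g₃ k₃) :
    C.eqR g₁ k₁ g₃ k₃ := ⟨h.1.trans h'.1, h.2.trans h'.2⟩

lemma eqR_dist {g : G} {k : C.B} {g' : G} {k' : C.B} (h : C.eqR g k g' k') :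
    (cayley (C.S : Set G)).dist g g' ≤ C.D2 := by
  have h1 := dist_triangle' C.hSsym C.hSgen g (C.vv g k) g'
  have h2 := dist_vv (C := C) g k
  have h3 : (cayley (C.S : Set G)).dist (C.vv g k) g' ≤ C.n ^ 2 + C.n := by
    rw [h.1, dist_comm' (C.vv g' k') g']
    exact dist_vv g' k'
  unfold D2
  omega

/-- Transport along a word in `T`. -/
def Tr (C : Ctx G H A) : List ↥C.T → G → C.B → G → C.B → Prop
  | [], g, k, g', k' => g' = g ∧ k' = k
  | t :: w, g, k, g', k' => ∃ (c : G) (κ : C.B),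
      C.ff c * (κ : H) = C.ff g * (k : H) * (t : H) ∧
      (cayley (C.S : Set G)).dist g c ≤ C.s0 ∧ C.Tr w c κ g' k'

lemma tr_rel : ∀ {w : List ↥C.T} {g : G} {k : C.B} {g' : G} {k' : C.B}, C.Tr w g k g' k' →
    C.ff g' * (k' : H) = C.ff g * (k : H) * wordProd C.T w := by
  intro w
  induction w with
  | nil => rintro g k g' k' ⟨rfl, rfl⟩; simp
  | cons t w ih =>
    rintro g k g' k' ⟨c, κ, hc, _, htr⟩
    rw [ih htr, hc, wordProd_cons, mul_assoc]

lemma tr_dist : ∀ {w : List ↥C.T} {g : G} {k : C.B} {g' : G} {k' : C.B}, C.Tr w g k g' k' →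
    (cayley (C.S : Set G)).dist g g' ≤ C.s0 * w.length := by
  intro w
  induction w with
  | nil => rintro g k g' k' ⟨rfl, rfl⟩; simp [SimpleGraph.dist_self]
  | cons t w ih =>
    rintro g k g' k' ⟨c, κ, _, hd, htr⟩
    have h1 := dist_triangle' C.hSsym C.hSgen g c g'
    have h2 := ih htr
    have : C.s0 * (t :: w).length = C.s0 + C.s0 * w.length := by
      simp [List.length_cons, Nat.mul_succ, Nat.add_comm]
    omega

lemma tr_append : ∀ {w₁ w₂ : List ↥C.T} {g : G} {k : C.B} {g' : G} {k' : C.B}, C.Tr (w₁ ++ w₂) g k g' k' →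
    ∃ m κm, C.Tr w₁ g k m κm ∧ C.Tr w₂ m κm g' k' := by
  intro w₁
  induction w₁ with
  | nil => intro w₂ g k g' k' h; exact ⟨g, k, ⟨rfl, rfl⟩, h⟩
  | cons t w ih =>
    rintro w₂ g k g' k' ⟨c, κ, hc, hd, htr⟩
    obtain ⟨m, κm, h1, h2⟩ := ih htr
    exact ⟨m, κm, ⟨c, κ, hc, hd, h1⟩, h2⟩

lemma tr_exists : ∀ (w : List ↥C.T) (g : G) (k : C.B), ∃ g' k', C.Tr w g k g' k' := by
  intro w
  induction w with
  | nil => intro g k; exact ⟨g, k, rfl, rfl⟩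
  | cons t w ih =>
    intro g k
    obtain ⟨c, κ, hc, hd, _⟩ := step g k (t : H) (mem_S_dist_le t.2)
    obtain ⟨g', k', htr⟩ := ih c κ
    exact ⟨g', k', c, κ, hc, hd, htr⟩

lemma tr_par : ∀ {w : List ↥C.T} {g : G} {k : C.B} {g' : G} {k' : C.B} {a : G} {κa : C.B} {a' : G} {κa' : C.B},
    C.ff g * (k : H) = C.ff g' * (k' : H) → C.eqR g k g' k' →
    C.Tr w g k a κa → C.Tr w g' k' a' κa' → C.eqR a κa a' κa' := by
  intro w
  induction w with
  | nil =>
    rintro g k g' k' a κa a' κa' hh he ⟨rfl, rfl⟩ ⟨rfl, rfl⟩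
    exact he
  | cons t w ih =>
    rintro g k g' k' a κa a' κa' hh he ⟨c, κ, e1, d1, t1⟩ ⟨c', κ', e2, d2, t2⟩
    have hf : C.ff c * (κ : H) = C.ff c' * (κ' : H) := by rw [e1, e2, hh]
    have hdist : (cayley (C.S : Set G)).dist c c' ≤ C.D := by
      have h1 := dist_triangle' C.hSsym C.hSgen c g c'
      have h2 := dist_triangle' C.hSsym C.hSgen g g' c'
      have h3 := eqR_dist he
      rw [dist_comm' c g] at h1
      have h4 := par_arith (C := C)
      omega
    exact ih hf (c_loc hf hdist) t1 t2

lemma tr_elem {w w' : List ↥C.T} {g : G} {k : C.B} {a : G} {κa : C.B} {a' : G} {κa' : C.B}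
    (helem : ElemMove C.T C.K_H w w')
    (h1 : C.Tr w g k a κa) (h2 : C.Tr w' g k a' κa') : C.eqR a κa a' κa' := by
  obtain ⟨u, v, v', x, rfl, rfl, hv, hv', hvv⟩ := helem
  rw [List.append_assoc] at h1 h2
  obtain ⟨m1, κm1, hu1, hx1⟩ := tr_append h1
  obtain ⟨c1, κc1, hv1, hxx1⟩ := tr_append hx1
  obtain ⟨m2, κm2, hu2, hx2⟩ := tr_append h2
  obtain ⟨c2, κc2, hv2, hxx2⟩ := tr_append hx2
  have hem : C.eqR m1 κm1 m2 κm2 := tr_par rfl (eqR_refl _ _) hu1 hu2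
  have hfm : C.ff m1 * (κm1 : H) = C.ff m2 * (κm2 : H) := by
    rw [tr_rel hu1, tr_rel hu2]
  have hfc : C.ff c1 * (κc1 : H) = C.ff c2 * (κc2 : H) := by
    rw [tr_rel hv1, tr_rel hv2, hfm, hvv]
  have hdc : (cayley (C.S : Set G)).dist c1 c2 ≤ C.D := by
    have h1' := tr_dist hv1
    have h2' := tr_dist hv2
    have h3 := eqR_dist hem
    have h4 := dist_triangle' C.hSsym C.hSgen c1 m1 c2
    have h5 := dist_triangle' C.hSsym C.hSgen m1 m2 c2
    rw [dist_comm' c1 m1] at h4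
    have h6 : C.s0 * v.length ≤ C.s0 * C.K_H := Nat.mul_le_mul_left _ hv
    have h7 : C.s0 * v'.length ≤ C.s0 * C.K_H := Nat.mul_le_mul_left _ hv'
    have h8 := elem_arith (le_refl C.K_H) (le_refl C.K_H)
    omega
  exact tr_par hfc (c_loc hfc hdc) hxx1 hxx2

lemma tr_word {w w' : List ↥C.T} {g : G} {k : C.B} {a : G} {κa : C.B} {a' : G} {κa' : C.B}
    (hp : wordProd C.T w = wordProd C.T w')
    (h1 : C.Tr w g k a κa) (h2 : C.Tr w' g k a' κa') : C.eqR a κa a' κa' := by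
  have key : ∀ w'', Relation.ReflTransGen (ElemMove C.T C.K_H) w w'' →
      ∀ a'' κ'', C.Tr w'' g k a'' κ'' → C.eqR a κa a'' κ'' := by
    intro w'' hch
    induction hch with
    | refl => intro a'' κ'' h2'; exact tr_par rfl (eqR_refl _ _) h1 h2'
    | @tail b c _ hstep ih =>
      intro a'' κ'' h2'
      obtain ⟨m, κm, hm⟩ := tr_exists b g k
      exact eqR_trans (ih m κm hm) (tr_elem hstep hm h2')
  exact key w' (C.hpresT w w' hp) a' κa' h2

/-- Transport parallel to a stationary base point. -/
lemma stat : ∀ (w : List ↥C.T) (g : G) (p : C.B) (a : G) (κ : C.B) (b : G) (κ₂ : C.B),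
    C.ff a * (κ : H) = C.ff g * (p : H) → C.eqR a κ g p →
    (∀ u : List ↥C.T, u <+: w →
      (cayley (C.T : Set H)).dist 1 ((p : H) * wordProd C.T u) ≤ C.n) →
    C.Tr w a κ b κ₂ →
    C.ff b * (κ₂ : H) = C.ff g * ((p : H) * wordProd C.T w) ∧
      ∀ hm : ((p : H) * wordProd C.T w) ∈ ball (C.T : Set H) C.n 1,
        C.eqR b κ₂ g ⟨_, hm⟩ := by
  intro w
  induction w with
  | nil =>
    rintro g p a κ b κ₂ hf he hpre ⟨rfl, rfl⟩
    constructor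
    · simpa using hf
    · intro hm
      have : (⟨(p : H) * wordProd C.T [], hm⟩ : C.B) = p := Subtype.ext (by simp)
      rw [this]
      exact he
  | cons t w ih =>
    rintro g p a κ b κ₂ hf he hpre ⟨c, κc, e1, d1, t1⟩
    have hptm : (cayley (C.T : Set H)).dist 1 ((p : H) * (t : H)) ≤ C.n := by
      have := hpre [t] (List.cons_prefix_cons.mpr ⟨rfl, List.nil_prefix⟩)
      simpa [wordProd_cons] using this
    set pt : C.B := ⟨(p : H) * (t : H), mem_ball_one.mpr hptm⟩ with hpt
    have hfc : C.ff c * (κc : H) = C.ff g * (pt : H) := by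
      rw [e1, hf, hpt, mul_assoc]
    have hdc : (cayley (C.S : Set G)).dist c g ≤ C.D := by
      have h1 := dist_triangle' C.hSsym C.hSgen c a g
      rw [dist_comm' c a] at h1
      have h2 := eqR_dist he
      have h3 := stat_arith (C := C)
      omega
    have hec : C.eqR c κc g pt := c_loc hfc hdc
    have hpre' : ∀ u : List ↥C.T, u <+: w →
        (cayley (C.T : Set H)).dist 1 ((pt : H) * wordProd C.T u) ≤ C.n := by
      intro u hu
      have := hpre (t :: u) (List.cons_prefix_cons.mpr ⟨rfl, hu⟩)
      simpa [hpt, wordProd_cons, mul_assoc] using this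
    obtain ⟨hfb, heb⟩ := ih g pt c κc b κ₂ hfc hec hpre' t1
    have hprod : (pt : H) * wordProd C.T w = (p : H) * wordProd C.T (t :: w) := by
      rw [hpt, wordProd_cons, mul_assoc]
    constructor
    · rw [hfb, hprod]
    · intro hm
      have hm' : ((pt : H) * wordProd C.T w) ∈ ball (C.T : Set H) C.n 1 := by
        rw [hprod]; exact hm
      have := heb hm'
      have heq : (⟨(pt : H) * wordProd C.T w, hm'⟩ : C.B) =
          ⟨(p : H) * wordProd C.T (t :: w), hm⟩ := Subtype.ext hprod
      rwa [heq] at this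

end Ctx
end S19
namespace S19
namespace Ctx
variable {G H A : Type*} [Group G] [Group H] {C : Ctx G H A}

/-- Tracking `f` along a geodesic in `G` by transport in `H`. -/
lemma gtrack : ∀ wS : List ↥C.S, ∃ wT : List ↥C.T,
    wordProd C.T wT = C.ff (wordProd C.S wS) ∧
    ∀ a κ, C.Tr wT 1 C.oneB a κ → C.eqR a κ (wordProd C.S wS) C.oneB := by
  intro wS
  induction wS using List.reverseRecOn with
  | nil =>
    refine ⟨[], by rw [wordProd_nil, wordProd_nil, ff_one], ?_⟩
    rintro a κ ⟨rfl, rfl⟩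
    rw [wordProd_nil]
    exact eqR_refl _ _
  | append_singleton wS s ih =>
    obtain ⟨wT, hprod, hend⟩ := ih
    set g := wordProd C.S wS with hg
    have hgs : wordProd C.S (wS ++ [s]) = g * (s : G) := by
      rw [wordProd_append, wordProd_singleton]
    set wδ := geo C.hTsym C.hTgen (C.delta g s) with hwδ
    refine ⟨wT ++ wδ, ?_, ?_⟩
    · rw [wordProd_append, hprod, (geo_spec C.hTsym C.hTgen _).2, hgs, ff_step]
    · intro a κ htr
      obtain ⟨m, κm, hm, hrest⟩ := tr_append htr
      have hem := hend m κm hm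
      have hfm : C.ff m * (κm : H) = C.ff g * (C.oneB : H) := by
        rw [tr_rel hm]
        simp [ff_one, hprod]
      have hpre : ∀ u : List ↥C.T, u <+: wδ →
          (cayley (C.T : Set H)).dist 1 ((C.oneB : H) * wordProd C.T u) ≤ C.n := by
        intro u hu
        rw [oneB_coe, one_mul]
        calc (cayley (C.T : Set H)).dist 1 (wordProd C.T u)
            ≤ u.length := dist_word_le C.hTsym C.hTgen u
          _ ≤ wδ.length := hu.length_le
          _ ≤ (cayley (C.T : Set H)).dist 1 (C.delta g s) :=
              (geo_spec C.hTsym C.hTgen _).1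
          _ ≤ C.n := dist_delta g s
      obtain ⟨hfb, heb⟩ := stat wδ g C.oneB m κm a κ hfm hem hpre hrest
      have hδmem : C.delta g s ∈ ball (C.T : Set H) C.n 1 :=
        mem_ball_one.mpr (dist_delta g s)
      have hmem : ((C.oneB : H) * wordProd C.T wδ) ∈ ball (C.T : Set H) C.n 1 := by
        rw [oneB_coe, one_mul, (geo_spec C.hTsym C.hTgen _).2]
        exact hδmem
      have he1 := heb hmem
      have hsub : (⟨(C.oneB : H) * wordProd C.T wδ, hmem⟩ : C.B) = ⟨C.delta g s, hδmem⟩ :=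
        Subtype.ext (show (C.oneB : H) * wordProd C.T wδ = C.delta g s by
          rw [oneB_coe, one_mul, (geo_spec C.hTsym C.hTgen _).2])
      rw [hsub] at he1
      have hho : C.ff g * ((⟨C.delta g s, hδmem⟩ : C.B) : H) =
          C.ff (g * (s : G)) * (C.oneB : H) := by
        show C.ff g * C.delta g s = C.ff (g * (s : G)) * (C.oneB : H)
        rw [ff_step, oneB_coe, mul_one]
      have hdist : (cayley (C.S : Set G)).dist g (g * (s : G)) ≤ C.D := by
        rw [dist_mul_right]
        exact le_trans (mem_S_dist_le s.2) one_le_D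
      have he2 := c_loc hho hdist
      rw [hgs]
      exact eqR_trans he1 he2

/-- Every representative is anchored by a transport from the basepoint. -/
lemma anchor (g : G) (k : C.B) : ∃ (W : List ↥C.T) (a : G) (κ : C.B),
    wordProd C.T W = C.ff g * (k : H) ∧ C.Tr W 1 C.oneB a κ ∧ C.eqR a κ g k := by
  obtain ⟨wT, hprod, hend⟩ := gtrack (geo C.hSsym C.hSgen g)
  rw [(geo_spec C.hSsym C.hSgen g).2] at hprod hend
  set wk := geo C.hTsym C.hTgen (k : H) with hwk
  obtain ⟨a, κ, htr⟩ := tr_exists (wT ++ wk) 1 C.oneB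
  obtain ⟨m, κm, hm, hrest⟩ := tr_append htr
  have hem := hend m κm hm
  have hfm : C.ff m * (κm : H) = C.ff g * (C.oneB : H) := by
    rw [tr_rel hm]
    simp [ff_one, hprod]
  have hpre : ∀ u : List ↥C.T, u <+: wk →
      (cayley (C.T : Set H)).dist 1 ((C.oneB : H) * wordProd C.T u) ≤ C.n := by
    intro u hu
    rw [oneB_coe, one_mul]
    calc (cayley (C.T : Set H)).dist 1 (wordProd C.T u)
        ≤ u.length := dist_word_le C.hTsym C.hTgen u
      _ ≤ wk.length := hu.length_le
      _ ≤ (cayley (C.T : Set H)).dist 1 (k : H) := (geo_spec C.hTsym C.hTgen _).1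
      _ ≤ C.n := dist_B k
  obtain ⟨hfb, heb⟩ := stat wk g C.oneB m κm a κ hfm hem hpre hrest
  have hmem : ((C.oneB : H) * wordProd C.T wk) ∈ ball (C.T : Set H) C.n 1 := by
    rw [oneB_coe, one_mul, (geo_spec C.hTsym C.hTgen _).2]
    exact k.2
  have he1 := heb hmem
  have hsub : (⟨(C.oneB : H) * wordProd C.T wk, hmem⟩ : C.B) = k :=
    Subtype.ext (show (C.oneB : H) * wordProd C.T wk = (k : H) by
      rw [oneB_coe, one_mul, (geo_spec C.hTsym C.hTgen _).2])
  rw [hsub] at he1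
  refine ⟨wT ++ wk, a, κ, ?_, htr, he1⟩
  rw [wordProd_append, hprod, (geo_spec C.hTsym C.hTgen _).2]

/-- Global coherence: representatives of the same point of `H` carry the same data. -/
lemma c_global {g g' : G} {k k' : C.B} (hh : C.ff g * (k : H) = C.ff g' * (k' : H)) :
    C.eqR g k g' k' := by
  obtain ⟨W, a, κ, hW, htr, he⟩ := anchor g k
  obtain ⟨W', a', κ', hW', htr', he'⟩ := anchor g' k'
  have hp : wordProd C.T W = wordProd C.T W' := by rw [hW, hW', hh]
  exact eqR_trans (eqR_symm he) (eqR_trans (tr_word hp htr htr') he')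

lemma dens_step {a b : H} (hadj : (cayley (C.T : Set H)).Adj a b)
    (hrep : ∃ (g : G) (k : C.B), C.ff g * (k : H) = a) :
    ∃ (g : G) (k : C.B), C.ff g * (k : H) = b := by
  obtain ⟨g, k, hk⟩ := hrep
  obtain ⟨c, κ, hc, _, _⟩ := step g k (a⁻¹ * b) (dist_one_of_adj hadj)
  refine ⟨c, κ, ?_⟩
  rw [hc, hk]
  group

/-- Density: every element of `H` has a representative. -/
lemma dens (h : H) : ∃ (g : G) (k : C.B), C.ff g * (k : H) = h := by
  obtain ⟨p⟩ := reachable_one C.hTsym C.hTgen h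
  have key : ∀ {a b : H}, (cayley (C.T : Set H)).Walk a b →
      (∃ (g : G) (k : C.B), C.ff g * (k : H) = a) →
      ∃ (g : G) (k : C.B), C.ff g * (k : H) = b := by
    intro a b q
    induction q with
    | nil => exact id
    | cons hadj q ih => exact fun h0 => ih (dens_step hadj h0)
  exact key p ⟨1, C.oneB, by simp [ff_one]⟩

end Ctx
end S19
namespace S19
namespace Ctx
variable {G H A : Type*} [Group G] [Group H] {C : Ctx G H A}

lemma dist_one_R : (cayley (C.S : Set G)).dist 1 (1 : G) ≤ C.R := by
  simp [SimpleGraph.dist_self]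

lemma lam_base (g : G) (k : C.B) : C.lam g k = C.Fg g (k : H) := by
  have h2 := C.hw2 g 1 dist_one_R k
  rw [mul_one, C.hf1 g, one_mul, inv_one, one_mul] at h2
  exact h2

lemma vv_base (g : G) (k : C.B) : C.vv g k = g * C.Fg g (k : H) := by
  rw [vv, lam_base]

lemma sv_base (g : G) (k : C.B) : C.sv g k = C.σg g (k : H) := by
  have h3 := C.hw3 g 1 dist_one_R k
  rw [mul_one, C.hf1 g, one_mul] at h3
  exact h3

lemma dist_Fg1 (g : G) : (cayley (C.S : Set G)).dist 1 (C.Fg g 1) ≤ C.n := by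
  have h := (C.hQI g).2.2.1 1
  rw [C.hf1 g] at h
  rwa [dist_comm' (C.Fg g 1) 1] at h

lemma lip_of_step (φ : H → G)
    (hstep : ∀ {a b : H}, (cayley (C.T : Set H)).Adj a b →
      (cayley (C.S : Set G)).dist (φ a) (φ b) ≤ C.n) :
    IsLip (C.T : Set H) (C.S : Set G) C.n φ := by
  have aux : ∀ {a b : H} (p : (cayley (C.T : Set H)).Walk a b),
      (cayley (C.S : Set G)).dist (φ a) (φ b) ≤ C.n * p.length := by
    intro a b p
    induction p with
    | nil => simp [SimpleGraph.dist_self]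
    | @cons a m b hadj q ih =>
      have h1 := dist_triangle' C.hSsym C.hSgen (φ a) (φ m) (φ b)
      have h2 := hstep hadj
      have h3 : C.n * (SimpleGraph.Walk.cons hadj q).length = C.n * q.length + C.n := by
        rw [SimpleGraph.Walk.length_cons, Nat.mul_succ]
      omega
  intro x y
  have hreach : (cayley (C.T : Set H)).Reachable x y :=
    (reachable_one C.hTsym C.hTgen x).symm.trans (reachable_one C.hTsym C.hTgen y)
  obtain ⟨p, hp⟩ := hreach.exists_walk_length_eq_dist
  rw [← hp]
  exact aux p

/-- The main reconstruction: the window data integrates to a global witness. -/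
lemma reconstruction (ρ : ℕ)
    (hXinv : ∀ σ' ∈ C.X_H, ∀ a : H, (fun y => σ' (a * y)) ∈ C.X_H)
    (hXloc : ∀ σ' : H → A, (∀ h : H, ∃ σ'' ∈ C.X_H, ∀ x : H,
        (cayley (C.T : Set H)).dist 1 x ≤ ρ → σ' (h * x) = σ'' x) → σ' ∈ C.X_H)
    (hRρ : C.n + C.n * (C.n + ρ) ≤ C.R) :
    Good C.S C.T C.n C.X_H C.τ := by
  classical
  have hd : ∀ h : H, ∃ (g : G) (k : C.B), C.ff g * (k : H) = h := fun h => dens h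
  choose gh kh hrep using hd
  set F : H → G := fun h => C.vv (gh h) (kh h) with hF
  set σ : H → A := fun h => C.sv (gh h) (kh h) with hσdef
  have hFv : ∀ (g : G) (k : C.B), F (C.ff g * (k : H)) = C.vv g k := fun g k =>
    (c_global (hrep (C.ff g * (k : H)))).1
  have hσv : ∀ (g : G) (k : C.B), σ (C.ff g * (k : H)) = C.sv g k := fun g k =>
    (c_global (hrep (C.ff g * (k : H)))).2
  have hn2 : C.n * C.n = C.n ^ 2 := (pow_two C.n).symm
  -- Lipschitz bound for F over one edge
  have hstep1 : ∀ {a b : H}, (cayley (C.T : Set H)).Adj a b →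
      (cayley (C.S : Set G)).dist (F a) (F b) ≤ C.n := by
    intro a b hadj
    have ha : C.ff (gh a) * (kh a : H) = a := hrep a
    have ht : (cayley (C.T : Set H)).dist 1 (a⁻¹ * b) ≤ 1 := dist_one_of_adj hadj
    obtain ⟨c, κ, hc, _, hvvc⟩ := step (gh a) (kh a) (a⁻¹ * b) ht
    have hb : C.ff c * (κ : H) = b := by rw [hc, ha]; group
    have hFa : F a = gh a * C.Fg (gh a) (kh a : H) := by
      show C.vv (gh a) (kh a) = _
      exact vv_base _ _
    have hFb : F b = gh a * C.Fg (gh a) ((kh a : H) * (a⁻¹ * b)) := by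
      have h0 := hFv c κ
      rw [hb] at h0
      rw [h0, hvvc]
    rw [hFa, hFb, dist_lmul]
    calc (cayley (C.S : Set G)).dist (C.Fg (gh a) (kh a : H))
          (C.Fg (gh a) ((kh a : H) * (a⁻¹ * b)))
        ≤ C.n * (cayley (C.T : Set H)).dist (kh a : H) ((kh a : H) * (a⁻¹ * b)) :=
          (C.hQI (gh a)).2.1 _ _
      _ = C.n * (cayley (C.T : Set H)).dist 1 (a⁻¹ * b) := by rw [dist_mul_right]
      _ ≤ C.n * 1 := Nat.mul_le_mul_left _ ht
      _ = C.n := Nat.mul_one _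
  refine ⟨C.ff, F, σ, ⟨ff_lip, lip_of_step F hstep1, ?_, ?_⟩, ?_, ?_, ?_, ?_⟩
  · -- dist (F (ff g)) g ≤ n
    intro g
    have e : C.ff g = C.ff g * (C.oneB : H) := by simp
    rw [e, hFv, vv_base]
    have := dist_Fg1 (C := C) g
    rw [dist_comm' (g * C.Fg g (C.oneB : H)) g, dist_mul_right, oneB_coe]
    exact this
  · -- dist (ff (F h)) h ≤ n
    intro h
    have ha : C.ff (gh h) * (kh h : H) = h := hrep h
    have hFh : F h = gh h * C.Fg (gh h) (kh h : H) := by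
      show C.vv (gh h) (kh h) = _
      exact vv_base _ _
    have hu : (cayley (C.S : Set G)).dist 1 (C.Fg (gh h) (kh h : H)) ≤ C.s0 := by
      have h1 := dist_Fg1 (C := C) (gh h)
      have h2 : (cayley (C.S : Set G)).dist (C.Fg (gh h) 1) (C.Fg (gh h) (kh h : H)) ≤
          C.n * C.n := by
        refine le_trans ((C.hQI (gh h)).2.1 1 (kh h : H)) ?_
        exact Nat.mul_le_mul_left _ (dist_B (kh h))
      have h3 := dist_triangle' C.hSsym C.hSgen 1 (C.Fg (gh h) 1) (C.Fg (gh h) (kh h : H))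
      have : C.s0 = C.n ^ 2 + 2 * C.n := rfl
      omega
    have hwin := window (C := C) (g := gh h) (le_trans hu s0_le_R)
    have hgoal : (cayley (C.T : Set H)).dist
        (C.ff (gh h) * C.fg (gh h) (C.Fg (gh h) (kh h : H))) (C.ff (gh h) * (kh h : H))
        ≤ C.n := by
      rw [dist_lmul]
      exact (C.hQI (gh h)).2.2.2 (kh h : H)
    rw [ha] at hgoal
    rw [hFh, hwin]
    exact hgoal
  · -- σ ∈ X_H
    apply hXloc
    intro h
    have ha : C.ff (gh h) * (kh h : H) = h := hrep h
    refine ⟨fun y => C.σg (gh h) ((kh h : H) * y), hXinv _ (C.hσX (gh h)) (kh h : H), ?_⟩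
    intro x hx
    have hkx : (cayley (C.T : Set H)).dist 1 ((kh h : H) * x) ≤ C.n + ρ :=
      le_trans (dist_one_mul_le C.hTsym C.hTgen _ _) (Nat.add_le_add (dist_B (kh h)) hx)
    have hu : (cayley (C.S : Set G)).dist 1 (C.Fg (gh h) ((kh h : H) * x)) ≤
        C.n + C.n * (C.n + ρ) := by
      have h1 := dist_Fg1 (C := C) (gh h)
      have h2 : (cayley (C.S : Set G)).dist (C.Fg (gh h) 1)
          (C.Fg (gh h) ((kh h : H) * x)) ≤ C.n * (C.n + ρ) := by
        refine le_trans ((C.hQI (gh h)).2.1 1 _) ?_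
        exact Nat.mul_le_mul_left _ hkx
      have h3 := dist_triangle' C.hSsym C.hSgen 1 (C.Fg (gh h) 1)
        (C.Fg (gh h) ((kh h : H) * x))
      omega
    have huR : (cayley (C.S : Set G)).dist 1 (C.Fg (gh h) ((kh h : H) * x)) ≤ C.R :=
      le_trans hu hRρ
    have hwin := window (C := C) (g := gh h) huR
    have hκ : (cayley (C.T : Set H)).dist 1
        ((C.fg (gh h) (C.Fg (gh h) ((kh h : H) * x)))⁻¹ * ((kh h : H) * x)) ≤ C.n := by
      have := (C.hQI (gh h)).2.2.2 ((kh h : H) * x)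
      rwa [dist_conj] at this
    set κB : C.B := ⟨_, mem_ball_one.mpr hκ⟩ with hκB
    have he : C.fg (gh h) (C.Fg (gh h) ((kh h : H) * x)) * (κB : H) = (kh h : H) * x := by
      show C.fg (gh h) (C.Fg (gh h) ((kh h : H) * x)) *
        ((C.fg (gh h) (C.Fg (gh h) ((kh h : H) * x)))⁻¹ * ((kh h : H) * x)) = _
      group
    have hrep2 : C.ff (gh h * C.Fg (gh h) ((kh h : H) * x)) * (κB : H) = h * x := by
      rw [hwin, mul_assoc, he, ← mul_assoc, ha]
    have h1 : σ (h * x) = C.sv (gh h * C.Fg (gh h) ((kh h : H) * x)) κB := by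
      rw [← hrep2, hσv]
    have h3 := C.hw3 (gh h) (C.Fg (gh h) ((kh h : H) * x)) huR κB
    rw [h1, sv, h3, he]
  · -- first component
    intro g s
    rw [ff_step, inv_mul_cancel_left]
    rfl
  · -- second component
    intro g k
    rw [hFv g k, vv_base, inv_mul_cancel_left]
    exact lam_base g k
  · -- third component
    intro g k
    rw [hσv g k]
    rfl
end Ctx
end S19

open S19

/-- for finitely presented `G`, `H`, a finite alphabet `A` and an SFT
`X_H ⊆ A^H`, the set of triples `(df, ℓ_{Ff}, f*(B_n σ))` over all `n`-QI pairs `(f,F)` and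
`σ ∈ X_H`, viewed inside `𝒜^G` with
`𝒜 = B_H(n,1)^S × B_G(n²+n,1)^{B_H(n,1)} × A^{B_H(n,1)}`, is a subshift of finite type.
Here `⟨B_nσ(h),k⟩ = σ(hk)` and `f*τ = τ ∘ f`, so the third component is
`g ↦ (k ↦ σ(f(g)·k))`. -/
theorem stmt19 {G H : Type*} [Group G] [Group H] (S : Finset G) (T : Finset H)
    (hSsym : ∀ s ∈ S, s⁻¹ ∈ S) (hSgen : Subgroup.closure (S : Set G) = ⊤)
    (hTsym : ∀ t ∈ T, t⁻¹ ∈ T) (hTgen : Subgroup.closure (T : Set H) = ⊤)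
    (hGfp : ∃ K : ℕ, PresentedBy S K) (hHfp : ∃ K : ℕ, PresentedBy T K)
    {A : Type*} [Finite A] (X_H : Set (H → A)) (hXH : IsSFT X_H) (n : ℕ) :
    IsSFT {τ : G → ((↥S → ↥(ball (T : Set H) n 1)) ×
        (↥(ball (T : Set H) n 1) → ↥(ball (S : Set G) (n ^ 2 + n) 1)) ×
        (↥(ball (T : Set H) n 1) → A)) |
      ∃ (f : G → H) (F : H → G) (σ : H → A),
        IsQIPair (S : Set G) (T : Set H) n f F ∧ σ ∈ X_H ∧
        (∀ (g : G) (s : ↥S), (((τ g).1 s : H)) = (f g)⁻¹ * f (g * ↑s)) ∧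
        (∀ (g : G) (k : ↥(ball (T : Set H) n 1)),
          (((τ g).2.1 k : G)) = g⁻¹ * F (f g * ↑k)) ∧
        (∀ (g : G) (k : ↥(ball (T : Set H) n 1)),
          (τ g).2.2 k = σ (f g * ↑k))} := by
  classical
  obtain ⟨K_G, hpresG⟩ := hGfp
  obtain ⟨K_H, hpresT⟩ := hHfp
  obtain ⟨ι, hι, Fi, pi, hXeq⟩ := hXH
  haveI := hι
  haveI : Fintype ι := Fintype.ofFinite ι
  set ρ : ℕ := Finset.univ.sup
    (fun i : ι => (Fi i).sup (fun x => (cayley (T : Set H)).dist 1 x)) with hρdef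
  have hρx : ∀ (i : ι) (x : ↥(Fi i)), (cayley (T : Set H)).dist 1 (x : H) ≤ ρ := by
    intro i x
    refine le_trans ?_ (Finset.le_sup (Finset.mem_univ i))
    exact Finset.le_sup x.2
  have hXinv : ∀ σ' ∈ X_H, ∀ a : H, (fun y => σ' (a * y)) ∈ X_H := by
    intro σ' hσ' a
    rw [hXeq] at hσ' ⊢
    intro g i
    obtain ⟨x, hx⟩ := hσ' (a * g) i
    refine ⟨x, ?_⟩
    show σ' (a * (g * (x : H))) ≠ pi i x
    rw [← mul_assoc]
    exact hx
  have hXloc : ∀ σ' : H → A, (∀ h : H, ∃ σ'' ∈ X_H, ∀ x : H,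
      (cayley (T : Set H)).dist 1 x ≤ ρ → σ' (h * x) = σ'' x) → σ' ∈ X_H := by
    intro σ' hl
    rw [hXeq]
    intro g i
    obtain ⟨σ'', hσ''X, hagree⟩ := hl g
    rw [hXeq] at hσ''X
    obtain ⟨x, hx⟩ := hσ''X 1 i
    rw [one_mul] at hx
    refine ⟨x, ?_⟩
    rw [hagree (x : H) (hρx i x)]
    exact hx
  set R : ℕ := K_G + (2 * (n ^ 2 + n) + 2 * (n ^ 2 + 2 * n) * (K_H + 1) + 1)
      + (n + n * (n + ρ)) with hRdef
  set W : Finset G := (ball_finite hSsym hSgen R).toFinset with hWdef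
  have hmemW : ∀ x : G, x ∈ W ↔ (cayley (S : Set G)).dist 1 x ≤ R := by
    intro x
    rw [hWdef, Set.Finite.mem_toFinset]
    exact mem_ball_one
  haveI : Finite ↥(ball (T : Set H) n 1) := (ball_finite hTsym hTgen n).to_subtype
  haveI : Finite ↥(ball (S : Set G) (n ^ 2 + n) 1) :=
    (ball_finite hSsym hSgen (n ^ 2 + n)).to_subtype
  show IsSFT {τ : G → Alp S T n A | Good S T n X_H τ}
  have hEq : {τ : G → Alp S T n A | Good S T n X_H τ} =
      {τ : G → Alp S T n A | ∀ g : G,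
        (fun q : ↥W → Alp S T n A => ∃ τ' : G → Alp S T n A,
          Good S T n X_H τ' ∧ ∀ x : ↥W, τ' (x : G) = q x) (fun x : ↥W => τ (g * (x : G)))} := by
    ext τ
    simp only [Set.mem_setOf_eq]
    constructor
    · intro hG g
      exact ⟨fun x => τ (g * x), hG.translate g, fun x => rfl⟩
    · intro hloc
      have key : ∀ g : G, ∃ (f : G → H) (F : H → G) (σ : H → A),
          IsQIPair (S : Set G) (T : Set H) n f F ∧ f 1 = 1 ∧ σ ∈ X_H ∧
          (∀ x, (cayley (S : Set G)).dist 1 x ≤ R → ∀ s : ↥S,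
            ((τ (g * x)).1 s : H) = (f x)⁻¹ * f (x * (s : G))) ∧
          (∀ x, (cayley (S : Set G)).dist 1 x ≤ R → ∀ k : ↥(ball (T : Set H) n 1),
            ((τ (g * x)).2.1 k : G) = x⁻¹ * F (f x * (k : H))) ∧
          (∀ x, (cayley (S : Set G)).dist 1 x ≤ R → ∀ k : ↥(ball (T : Set H) n 1),
            (τ (g * x)).2.2 k = σ (f x * (k : H))) := by
        intro g
        obtain ⟨τ', hτ'G, hτ'm⟩ := hloc g
        obtain ⟨f, F, σ, ⟨hfL, hFL, h3, h4⟩, hσX', e1, e2, e3⟩ := hτ'G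
        refine ⟨fun x => (f 1)⁻¹ * f x, fun h => F (f 1 * h), fun h => σ (f 1 * h),
          ⟨?_, ?_, ?_, ?_⟩, by simp, hXinv σ hσX' (f 1), ?_, ?_, ?_⟩
        · intro x y
          calc (cayley (T : Set H)).dist ((f 1)⁻¹ * f x) ((f 1)⁻¹ * f y)
              = (cayley (T : Set H)).dist (f x) (f y) := dist_lmul _ _ _
            _ ≤ n * (cayley (S : Set G)).dist x y := hfL x y
        · intro x y
          calc (cayley (S : Set G)).dist (F (f 1 * x)) (F (f 1 * y))
              ≤ n * (cayley (T : Set H)).dist (f 1 * x) (f 1 * y) := hFL _ _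
            _ = n * (cayley (T : Set H)).dist x y := by rw [dist_lmul]
        · intro x
          show (cayley (S : Set G)).dist (F (f 1 * ((f 1)⁻¹ * f x))) x ≤ n
          rw [show f 1 * ((f 1)⁻¹ * f x) = f x by group]
          exact h3 x
        · intro h
          show (cayley (T : Set H)).dist ((f 1)⁻¹ * f (F (f 1 * h))) h ≤ n
          calc (cayley (T : Set H)).dist ((f 1)⁻¹ * f (F (f 1 * h))) h
              = (cayley (T : Set H)).dist (f (F (f 1 * h))) (f 1 * h) := by
                rw [← dist_lmul (f 1) ((f 1)⁻¹ * f (F (f 1 * h))) h, mul_inv_cancel_left]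
            _ ≤ n := h4 _
        · intro x hx s
          have hτx : τ' x = τ (g * x) := hτ'm ⟨x, (hmemW x).mpr hx⟩
          show ((τ (g * x)).1 s : H) = ((f 1)⁻¹ * f x)⁻¹ * ((f 1)⁻¹ * f (x * (s : G)))
          rw [← hτx, e1 x s]
          group
        · intro x hx k
          have hτx : τ' x = τ (g * x) := hτ'm ⟨x, (hmemW x).mpr hx⟩
          show ((τ (g * x)).2.1 k : G) = x⁻¹ * F (f 1 * ((f 1)⁻¹ * f x * (k : H)))
          rw [← hτx, e2 x k, show f 1 * ((f 1)⁻¹ * f x * (k : H)) = f x * (k : H) by group]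
        · intro x hx k
          have hτx : τ' x = τ (g * x) := hτ'm ⟨x, (hmemW x).mpr hx⟩
          show (τ (g * x)).2.2 k = σ (f 1 * ((f 1)⁻¹ * f x * (k : H)))
          rw [← hτx, e3 x k, show f 1 * ((f 1)⁻¹ * f x * (k : H)) = f x * (k : H) by group]
      choose fg Fg σg hq hone hσ hw1 hw2 hw3 using key
      set C : Ctx G H A :=
        { S := S, T := T, n := n, K_G := K_G, K_H := K_H, R := R, X_H := X_H, τ := τ,
          hSsym := hSsym, hSgen := hSgen, hTsym := hTsym, hTgen := hTgen,
          hpresG := hpresG, hpresT := hpresT, fg := fg, Fg := Fg, σg := σg,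
          hQI := hq, hf1 := hone, hσX := hσ, hw1 := hw1, hw2 := hw2, hw3 := hw3,
          hRKG := le_trans (Nat.le_add_right _ _) (Nat.le_add_right _ _),
          hRD := le_trans (Nat.le_add_left _ _) (Nat.le_add_right _ _) } with hC
      exact Ctx.reconstruction (C := C) ρ hXinv hXloc (Nat.le_add_left _ _)
  rw [hEq]
  exact isSFT_window W (fun q : ↥W → Alp S T n A => ∃ τ' : G → Alp S T n A,
    Good S T n X_H τ' ∧ ∀ x : ↥W, τ' (x : G) = q x)
end
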